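/- arXiv:2211.10471 — 11 statements merged into one kernel-verified Lean document; each statement's English description precedes it below -/
import Mathlib

section
/- Fix a natural number n ≥ 2 and a probability measure μ on the reals with μ((-∞,0)) = 0 and finite first moment. Let T ≥ 0 be a threshold with μ((T,∞)) = 2/n. Let x_1,…,x_n be i.i.d. random variables with law μ (i.e., consider the n-fold product measure on Fin n → ℝ). Define the value of the SIMPLE algorithm as V = Σ_{i<σ} x_i + (n−σ+1)·x_σ if σ := min{ i : x_i > T } exists (σ ≤ n), and V = Σ_{i=1}^n x_i if no x_i exceeds T. Define the value of the optimal offline algorithm as OPT = Σ_{i=1}^n max{x_1,…,x_i}. Then E[V] ≥ ((1+e^{-2})/(3−e^{-2}))·E[OPT]. -/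
open MeasureTheory

/-- Value collected by the SIMPLE algorithm with threshold `T` on the realization
`x : Fin n → ℝ`: if some value exceeds `T`, let `σ` be the first such index
(0-based); all earlier values are collected for one step each and `x σ` is collected
for all `n − σ` remaining steps (which is `n − σ + 1` steps in 1-based counting);
otherwise every value is collected for one step. -/
noncomputable def simpleValue (n : ℕ) (T : ℝ) (x : Fin n → ℝ) : ℝ :=
  if h : ∃ i, T < x i then
    let σ := (Finset.univ.filter fun i => T < x i).min'
      (by obtain ⟨i, hi⟩ := h; exact ⟨i, by simp [hi]⟩)
    (∑ i ∈ Finset.univ.filter fun i => i < σ, x i) + ((n : ℝ) - (σ : ℕ)) * x σ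
  else ∑ i, x i

/-- Value collected by the optimal offline algorithm (the prophet): in each step `i`
it collects the maximum of the values seen so far. -/
noncomputable def optValue (n : ℕ) (x : Fin n → ℝ) : ℝ :=
  ∑ i, (Finset.Iic i).sup' Finset.nonempty_Iic x


lemma keyIdentity (q : ℝ) (n : ℕ) :
    (1 - q)^2 * (∑ s ∈ Finset.range n, ((n : ℝ) - s) * q ^ s)
      = n * (1 - q) - q + q ^ (n + 1) := by
  induction n with
  | zero => simp
  | succ n ih =>
    have hgeom : (∑ s ∈ Finset.range (n+1), q ^ s) * (q - 1) = q ^ (n+1) - 1 :=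
      geom_sum_mul q (n+1)
    have hsplit : (∑ s ∈ Finset.range (n+1), (((n:ℝ)+1) - s) * q ^ s)
        = (∑ s ∈ Finset.range n, ((n : ℝ) - s) * q ^ s)
          + (∑ s ∈ Finset.range (n+1), q ^ s) := by
      rw [Finset.sum_range_succ]
      rw [show (∑ s ∈ Finset.range n, (((n:ℝ)+1) - s) * q ^ s)
        = (∑ s ∈ Finset.range n, (((n : ℝ) - s) * q ^ s + q ^ s)) from by
          apply Finset.sum_congr rfl; intro s _; ring]
      rw [Finset.sum_add_distrib, Finset.sum_range_succ]
      ring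
    push_cast
    rw [hsplit]
    linear_combination ih - (1-q) * hgeom

lemma keyLower (n : ℕ) (hn : 2 ≤ n) (q : ℝ) (hq : q = 1 - 2/(n:ℝ)) :
    (n:ℝ) * (n + 2) / 4 ≤ ∑ s ∈ Finset.range n, ((n : ℝ) - s) * q ^ s := by
  have hn' : (2:ℝ) ≤ (n:ℝ) := by exact_mod_cast hn
  have hn0 : (0:ℝ) < n := by linarith
  have hns : (n:ℝ) ≠ 0 := ne_of_gt hn0
  have hdiv : 2/(n:ℝ) ≤ 1 := by rw [div_le_one hn0]; linarith
  have hq0 : 0 ≤ q := by rw [hq]; linarith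
  have h1q : 1 - q = 2 / (n:ℝ) := by rw [hq]; ring
  have hid := keyIdentity q n
  rw [h1q] at hid
  have h2 : (n:ℝ) * (2/(n:ℝ)) = 2 := by field_simp
  rw [h2] at hid
  have hqp : 0 ≤ q ^ (n+1) := pow_nonneg hq0 _
  have h4 : 1 + 2/(n:ℝ) ≤ (2/(n:ℝ))^2 * (∑ s ∈ Finset.range n, ((n : ℝ) - s) * q ^ s) := by
    rw [hid, hq]
    linarith [pow_nonneg (show (0:ℝ) ≤ 1 - 2/(n:ℝ) by linarith) (n+1)]
  have hmul := mul_le_mul_of_nonneg_left h4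
    (by positivity : (0:ℝ) ≤ (n:ℝ)^2/4)
  have e1 : (n:ℝ)^2/4 * ((2/(n:ℝ))^2 * (∑ s ∈ Finset.range n, ((n : ℝ) - s) * q ^ s))
      = ∑ s ∈ Finset.range n, ((n : ℝ) - s) * q ^ s := by
    field_simp; ring
  have e2 : (n:ℝ)^2/4 * (1 + 2/(n:ℝ)) = (n:ℝ) * (n + 2) / 4 := by
    field_simp
  rw [e1, e2] at hmul
  exact hmul

lemma expNeg2_le : Real.exp (-2) ≤ 1/3 := by
  have h3e : (3:ℝ) ≤ Real.exp 2 := by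
    have := Real.add_one_le_exp (2:ℝ); linarith
  rw [Real.exp_neg]
  have : (Real.exp 2)⁻¹ ≤ (3:ℝ)⁻¹ := by
    gcongr
  linarith [this]

lemma constIneq (n : ℕ) (hn : 2 ≤ n) :
    ((1 + Real.exp (-2)) / (3 - Real.exp (-2))) * ((n:ℝ)+1) ≤ ((n:ℝ)+2)/2 := by
  have hn' : (2:ℝ) ≤ (n:ℝ) := by exact_mod_cast hn
  have he := expNeg2_le
  have he0 : 0 < Real.exp (-2) := Real.exp_pos _
  set e := Real.exp (-2)
  have h3 : 0 < 3 - e := by linarith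
  rw [div_mul_eq_mul_div, div_le_div_iff₀ h3 (by norm_num : (0:ℝ) < 2)]
  nlinarith [mul_nonneg (by linarith : (0:ℝ) ≤ (n:ℝ)) (by linarith : (0:ℝ) ≤ 1 - 3*e)]

lemma combineIneq (n : ℕ) (hn : 2 ≤ n) (T A S : ℝ) (hT : 0 ≤ T) (hA : 0 ≤ A)
    (hS : (n:ℝ) * (n + 2) / 4 ≤ S) :
    ((1 + Real.exp (-2)) / (3 - Real.exp (-2))) * ((n:ℝ)*T + A*((n:ℝ)*(n+1)/2))
      ≤ (A + (2/(n:ℝ))*T) * S := by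
  have hn' : (2:ℝ) ≤ (n:ℝ) := by exact_mod_cast hn
  have hn0 : (0:ℝ) < n := by linarith
  have he := expNeg2_le
  have he0 : 0 < Real.exp (-2) := Real.exp_pos _
  set c := (1 + Real.exp (-2)) / (3 - Real.exp (-2)) with hcdef
  have hc0 : 0 ≤ c := by
    apply div_nonneg <;> linarith
  have hc := constIneq n hn
  have hb0 : 0 ≤ A + (2/(n:ℝ))*T := by positivity
  have step1 : (A + (2/(n:ℝ))*T) * ((n:ℝ) * (n + 2) / 4) ≤ (A + (2/(n:ℝ))*T) * S :=
    mul_le_mul_of_nonneg_left hS hb0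
  have e1 : (A + (2/(n:ℝ))*T) * ((n:ℝ) * (n + 2) / 4)
      = A*((n:ℝ)*(n+2)/4) + T*(((n:ℝ)+2)/2) * ((n:ℝ)/(n:ℝ)) := by ring
  have hnn : (n:ℝ)/(n:ℝ) = 1 := div_self (ne_of_gt hn0)
  rw [hnn, mul_one] at e1
  have h1 : c*((n:ℝ)*T) ≤ T*(((n:ℝ)+2)/2) := by
    have hcn : c * (n:ℝ) ≤ ((n:ℝ)+2)/2 := by nlinarith
    calc c*((n:ℝ)*T) = (c*(n:ℝ))*T := by ring
      _ ≤ (((n:ℝ)+2)/2)*T := mul_le_mul_of_nonneg_right hcn hT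
      _ = T*(((n:ℝ)+2)/2) := by ring
  have h2 : c*(A*((n:ℝ)*(n+1)/2)) ≤ A*((n:ℝ)*(n+2)/4) := by
    calc c*(A*((n:ℝ)*(n+1)/2)) = (c*((n:ℝ)+1))*(A*(n:ℝ)/2) := by ring
      _ ≤ (((n:ℝ)+2)/2)*(A*(n:ℝ)/2) := mul_le_mul_of_nonneg_right hc (by positivity)
      _ = A*((n:ℝ)*(n+2)/4) := by ring
  calc c * ((n:ℝ)*T + A*((n:ℝ)*(n+1)/2)) = c*((n:ℝ)*T) + c*(A*((n:ℝ)*(n+1)/2)) := by ring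
    _ ≤ T*(((n:ℝ)+2)/2) + A*((n:ℝ)*(n+2)/4) := add_le_add h1 h2
    _ = (A + (2/(n:ℝ))*T) * ((n:ℝ) * (n + 2) / 4) := by rw [e1]; ring
    _ ≤ (A + (2/(n:ℝ))*T) * S := step1

noncomputable def gfun (n : ℕ) (T : ℝ) (s i : Fin n) (y : ℝ) : ℝ :=
  if i < s then (if y ≤ T then 1 else 0)
  else if i = s then ((n:ℝ) - (s:ℕ)) * (if T < y then y else 0) else 1

lemma prod_gfun (n : ℕ) (T : ℝ) (s : Fin n) (x : Fin n → ℝ) :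
    (∏ i, gfun n T s i (x i))
      = if ∀ i, i < s → x i ≤ T
          then ((n:ℝ) - (s:ℕ)) * (if T < x s then x s else 0) else 0 := by
  rw [← Finset.prod_filter_mul_prod_filter_not Finset.univ (· < s)]
  have h1 : (∏ i ∈ Finset.univ.filter (· < s), gfun n T s i (x i))
      = if ∀ i, i < s → x i ≤ T then 1 else 0 := by
    rw [show (∏ i ∈ Finset.univ.filter (· < s), gfun n T s i (x i))
        = ∏ i ∈ Finset.univ.filter (· < s), (if x i ≤ T then 1 else 0) from
      Finset.prod_congr rfl (fun i hi => by
        simp only [Finset.mem_filter] at hi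
        simp [gfun, hi.2])]
    rw [Finset.prod_boole]
    congr 1
    simp only [eq_iff_iff]
    constructor
    · intro h i hi; exact h i (by simp [hi])
    · intro h i hi; simp only [Finset.mem_filter] at hi; exact h i hi.2
  have h2 : (∏ i ∈ Finset.univ.filter (¬ · < s), gfun n T s i (x i))
      = ((n:ℝ) - (s:ℕ)) * (if T < x s then x s else 0) := by
    rw [Finset.prod_eq_single_of_mem s (by simp) (fun i hi hne => by
      simp only [Finset.mem_filter] at hi
      simp [gfun, hi.2, hne])]
    simp [gfun]
  rw [h1, h2]
  split_ifs with h h2 h3 <;> ring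

section Sigma
variable {n : ℕ} {T : ℝ} {x : Fin n → ℝ}

lemma sigma_gt (h : ∃ i, T < x i) :
    T < x ((Finset.univ.filter fun i => T < x i).min'
      (by obtain ⟨i, hi⟩ := h; exact ⟨i, by simp [hi]⟩)) := by
  have := Finset.min'_mem (Finset.univ.filter fun i => T < x i)
    (by obtain ⟨i, hi⟩ := h; exact ⟨i, by simp [hi]⟩)
  simpa using this

lemma sigma_le (h : ∃ i, T < x i) :
    ∀ i, i < ((Finset.univ.filter fun i => T < x i).min'
      (by obtain ⟨i, hi⟩ := h; exact ⟨i, by simp [hi]⟩)) → x i ≤ T := by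
  intro i hi
  by_contra hc
  push_neg at hc
  exact absurd (Finset.min'_le _ i (by simp [hc])) (not_le.mpr hi)

lemma lower_pointwise (hx : ∀ i, 0 ≤ x i) :
    (∑ s, ∏ i, gfun n T s i (x i)) ≤ simpleValue n T x := by
  simp only [prod_gfun]
  by_cases h : ∃ i, T < x i
  · unfold simpleValue
    rw [dif_pos h]
    set σ := (Finset.univ.filter fun i => T < x i).min'
      (by obtain ⟨i, hi⟩ := h; exact ⟨i, by simp [hi]⟩) with hσ
    have hgt : T < x σ := sigma_gt h
    have hle : ∀ i, i < σ → x i ≤ T := sigma_le h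
    have hsum : (∑ s : Fin n, if ∀ i, i < s → x i ≤ T
          then ((n:ℝ) - (s:ℕ)) * (if T < x s then x s else 0) else 0)
        = ((n:ℝ) - (σ:ℕ)) * x σ := by
      rw [Finset.sum_eq_single_of_mem σ (Finset.mem_univ σ)]
      · rw [if_pos hle, if_pos hgt]
      · intro s _ hne
        rcases lt_or_gt_of_ne hne with hlt | hgt'
        · split_ifs with h1 h2
          · exact absurd (hle s hlt) (not_le.mpr h2)
          · exact mul_zero _
          · rfl
        · rw [if_neg]
          intro hall
          exact absurd (hall σ hgt') (not_le.mpr hgt)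
    rw [hsum]
    exact le_add_of_nonneg_left (Finset.sum_nonneg fun i _ => hx i)
  · unfold simpleValue
    rw [dif_neg h]
    push_neg at h
    have : (∑ s : Fin n, if ∀ i, i < s → x i ≤ T
          then ((n:ℝ) - (s:ℕ)) * (if T < x s then x s else 0) else 0) = 0 := by
      apply Finset.sum_eq_zero
      intro s _
      split_ifs with h1 h2
      · exact absurd h2 (not_lt.mpr (h s))
      · exact mul_zero _
      · rfl
    rw [this]
    exact Finset.sum_nonneg fun i _ => hx i

end Sigma

lemma simpleValue_eq_decomp {n : ℕ} {T : ℝ} (x : Fin n → ℝ) :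
    simpleValue n T x =
      (∑ s : Fin n, Set.indicator {x : Fin n → ℝ | (∀ i, i < s → x i ≤ T) ∧ T < x s}
        (fun x => (∑ i ∈ Finset.univ.filter fun i => i < s, x i) + ((n:ℝ) - (s:ℕ)) * x s) x)
      + Set.indicator {x : Fin n → ℝ | ∀ i, x i ≤ T} (fun x => ∑ i, x i) x := by
  by_cases h : ∃ i, T < x i
  · unfold simpleValue
    rw [dif_pos h]
    set σ := (Finset.univ.filter fun i => T < x i).min'
      (by obtain ⟨i, hi⟩ := h; exact ⟨i, by simp [hi]⟩) with hσ
    have hgt : T < x σ := sigma_gt h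
    have hle : ∀ i, i < σ → x i ≤ T := sigma_le h
    have hlow : Set.indicator {x : Fin n → ℝ | ∀ i, x i ≤ T} (fun x => ∑ i, x i) x = 0 := by
      apply Set.indicator_of_notMem
      intro hmem
      obtain ⟨i, hi⟩ := h
      exact absurd (hmem i) (not_le.mpr hi)
    rw [hlow, add_zero]
    rw [Finset.sum_eq_single_of_mem σ (Finset.mem_univ σ)]
    · rw [Set.indicator_of_mem (show x ∈ {x : Fin n → ℝ | (∀ i, i < σ → x i ≤ T) ∧ T < x σ} from ⟨hle, hgt⟩)]
    · intro s _ hne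
      apply Set.indicator_of_notMem
      rcases lt_or_gt_of_ne hne with hlt | hgt'
      · intro hmem
        exact absurd (hle s hlt) (not_le.mpr hmem.2)
      · intro hmem
        exact absurd (hmem.1 σ hgt') (not_le.mpr hgt)
  · unfold simpleValue
    rw [dif_neg h]
    push_neg at h
    have h1 : ∀ s : Fin n, Set.indicator {x : Fin n → ℝ | (∀ i, i < s → x i ≤ T) ∧ T < x s}
        (fun x => (∑ i ∈ Finset.univ.filter fun i => i < s, x i) + ((n:ℝ) - (s:ℕ)) * x s) x = 0 :=
      fun s => Set.indicator_of_notMem (fun hmem => absurd hmem.2 (not_lt.mpr (h s))) _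
    rw [Finset.sum_congr rfl (fun s _ => h1 s), Finset.sum_const, smul_zero, zero_add,
      Set.indicator_of_mem (show x ∈ {x : Fin n → ℝ | ∀ i, x i ≤ T} from h)]

variable {n : ℕ} {μ : Measure ℝ} [IsProbabilityMeasure μ]

lemma map_eval (i : Fin n) :
    (Measure.pi fun _ : Fin n => μ).map (Function.eval i) = μ := by
  ext s hs
  rw [Measure.map_apply (measurable_pi_apply i) hs]
  have : Function.eval i ⁻¹' s = Set.pi Set.univ (Function.update (fun _ : Fin n => (Set.univ : Set ℝ)) i s) := by
    ext x
    simp only [Set.mem_preimage, Set.mem_pi, Set.mem_univ, true_implies, Function.update]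
    constructor
    · intro h j; split
      · next heq => subst heq; exact h
      · trivial
    · intro h; simpa using h i
  rw [this, Measure.pi_pi]
  calc ∏ j, μ (Function.update (fun _ : Fin n => (Set.univ : Set ℝ)) i s j)
      = ∏ j, if j = i then μ s else 1 := by
        apply Finset.prod_congr rfl; intro j _
        by_cases h : j = i <;> simp [Function.update, h]
    _ = μ s := by simp
  all_goals infer_instance

lemma mp_eval (i : Fin n) :
    MeasurePreserving (Function.eval i) (Measure.pi fun _ : Fin n => μ) μ :=
  ⟨measurable_pi_apply i, map_eval i⟩

lemma integrable_comp_eval {f : ℝ → ℝ} (hf : Integrable f μ) (i : Fin n) :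
    Integrable (fun x : Fin n → ℝ => f (x i)) (Measure.pi fun _ : Fin n => μ) :=
  (mp_eval i).integrable_comp hf.aestronglyMeasurable |>.mpr hf

lemma integral_comp_eval {f : ℝ → ℝ} (hf : AEStronglyMeasurable f μ) (i : Fin n) :
    ∫ x, f (x i) ∂(Measure.pi fun _ : Fin n => μ) = ∫ y, f y ∂μ := by
  rw [← map_eval (μ := μ) i] at hf
  conv_rhs => rw [← map_eval (μ := μ) i]
  rw [integral_map (measurable_pi_apply i).aemeasurable hf]

lemma ae_nonneg (hneg : μ (Set.Iio 0) = 0) :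
    ∀ᵐ x ∂(Measure.pi fun _ : Fin n => μ), ∀ i, 0 ≤ x i := by
  rw [MeasureTheory.ae_all_iff]
  intro i
  have : {x : Fin n → ℝ | ¬ 0 ≤ x i} ⊆ Function.eval i ⁻¹' (Set.Iio 0) := by
    intro x hx; simp at hx ⊢; linarith
  exact measure_mono_null this (Measure.pi_eval_preimage_null _ hneg)

lemma my_integral_pi {α : Type} [MeasurableSpace α] (μ' : Measure α) [SigmaFinite μ']
    (f : Fin n → α → ℝ) :
    ∫ x, ∏ i, f i (x i) ∂(Measure.pi fun _ : Fin n => μ') = ∏ i, ∫ y, f i y ∂μ' := by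
  letI : MeasureSpace α := ⟨μ'⟩
  exact MeasureTheory.integral_fin_nat_prod_eq_prod f

section Integrals
variable {n : ℕ} (T : ℝ) (μ : Measure ℝ) [IsProbabilityMeasure μ]

lemma integrable_ite_gt (hint : Integrable id μ) :
    Integrable (fun y => if T < y then y else 0) μ := by
  have : (fun y => if T < y then y else 0) = (Set.Ioi T).indicator id := by
    funext y; simp [Set.indicator_apply]
  rw [this]
  exact hint.indicator measurableSet_Ioi

lemma integrable_pospart (hint : Integrable id μ) :
    Integrable (fun y => max (y - T) 0) μ := by
  have h := (hint.sub (integrable_const T)).sup (integrable_const (0:ℝ))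
  exact h

lemma b_eq (hint : Integrable id μ) (hn2 : (0:ℝ) ≤ 2/(n:ℝ)) (hTq : μ (Set.Ioi T) = ENNReal.ofReal (2 / n)) :
    ∫ y, (if T < y then y else 0) ∂μ
      = (∫ y, max (y - T) 0 ∂μ) + T * (2/(n:ℝ)) := by
  have hIc : Integrable (fun y => if T < y then T else 0) μ := by
    have : (fun y => if T < y then T else 0) = (Set.Ioi T).indicator (fun _ => T) := by
      funext y; simp [Set.indicator_apply]
    rw [this]
    exact (integrable_const T).indicator measurableSet_Ioi
  have heq : (fun y => if T < y then y else 0)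
      = fun y => max (y - T) 0 + (if T < y then T else 0) := by
    funext y
    by_cases h : T < y
    · rw [if_pos h, if_pos h, max_eq_left (by linarith)]; ring
    · rw [if_neg h, if_neg h, max_eq_right (by push_neg at h; linarith), zero_add]
  rw [heq, integral_add (integrable_pospart T μ hint) hIc]
  congr 1
  have : (fun y => if T < y then T else 0) = (Set.Ioi T).indicator (fun _ => T) := by
    funext y; simp [Set.indicator_apply]
  rw [this, integral_indicator_const T measurableSet_Ioi, measureReal_def, hTq, smul_eq_mul,
    ENNReal.toReal_ofReal hn2, mul_comm]

lemma q_eq (hn2 : 2/(n:ℝ) ≤ 1) (hn2' : (0:ℝ) ≤ 2/(n:ℝ))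
    (hTq : μ (Set.Ioi T) = ENNReal.ofReal (2 / n)) :
    (μ (Set.Iic T)).toReal = 1 - 2/(n:ℝ) := by
  have hcompl : μ (Set.Iic T) = 1 - ENNReal.ofReal (2/n) := by
    rw [← Set.compl_Ioi, measure_compl measurableSet_Ioi (measure_ne_top μ _),
      measure_univ, hTq]
  rw [hcompl, ENNReal.toReal_sub_of_le (by simpa using ENNReal.ofReal_le_one.mpr hn2)
    ENNReal.one_ne_top]
  simp [ENNReal.toReal_ofReal hn2']

lemma integral_gfun (hint : Integrable id μ) (s i : Fin n) :
    ∫ y, gfun n T s i y ∂μ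
      = if i < s then (μ (Set.Iic T)).toReal
        else if i = s then ((n:ℝ) - (s:ℕ)) * ∫ y, (if T < y then y else 0) ∂μ
        else 1 := by
  by_cases h1 : i < s
  · simp only [gfun, if_pos h1]
    have : (fun y => if y ≤ T then (1:ℝ) else 0) = (Set.Iic T).indicator (fun _ => 1) := by
      funext y; simp [Set.indicator_apply]
    rw [this, integral_indicator_const (1:ℝ) measurableSet_Iic, smul_eq_mul, mul_one, measureReal_def]
  · by_cases h2 : i = s
    · simp only [gfun, if_neg h1, if_pos h2]
      rw [MeasureTheory.integral_const_mul]
    · simp only [gfun, if_neg h1, if_neg h2]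
      simp

end Integrals

section More
variable {n : ℕ} (T : ℝ) (μ : Measure ℝ) [IsProbabilityMeasure μ]

lemma measSet_le (s : Fin n) : MeasurableSet {x : Fin n → ℝ | ∀ i, i < s → x i ≤ T} := by
  have : {x : Fin n → ℝ | ∀ i, i < s → x i ≤ T}
      = ⋂ i, ⋂ (_ : i < s), {x : Fin n → ℝ | x i ≤ T} := by ext; simp
  rw [this]
  exact MeasurableSet.iInter fun i => MeasurableSet.iInter fun _ =>
    measurableSet_le (measurable_pi_apply i) measurable_const

lemma integrable_prod_gfun (hint : Integrable id μ) (s : Fin n) :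
    Integrable (fun x => ∏ i, gfun n T s i (x i)) (Measure.pi fun _ : Fin n => μ) := by
  have heq : (fun x : Fin n → ℝ => ∏ i, gfun n T s i (x i))
      = Set.indicator {x : Fin n → ℝ | ∀ i, i < s → x i ≤ T}
        (fun x => ((n:ℝ) - (s:ℕ)) * (if T < x s then x s else 0)) := by
    funext x
    rw [prod_gfun, Set.indicator_apply]
    rfl
  rw [heq]
  exact ((integrable_comp_eval (integrable_ite_gt T μ hint) s).const_mul _).indicator (measSet_le T s)

end More

section More2
variable {n : ℕ} (T : ℝ) (μ : Measure ℝ) [IsProbabilityMeasure μ]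

lemma prod_integral_gfun (s : Fin n) (q B : ℝ) :
    (∏ i : Fin n, if i < s then q else if i = s then B else 1) = q^(s:ℕ) * B := by
  rw [← Finset.prod_filter_mul_prod_filter_not Finset.univ (· < s)]
  have h1 : (∏ i ∈ Finset.univ.filter (· < s), if i < s then q else if i = s then B else 1)
      = q^(s:ℕ) := by
    rw [Finset.prod_congr rfl (fun i hi => by
      simp only [Finset.mem_filter] at hi
      rw [if_pos hi.2])]
    rw [Finset.prod_const]
    congr 1
    rw [show Finset.univ.filter (· < s) = Finset.Iio s from by ext; simp]
    exact Fin.card_Iio s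
  have h2 : (∏ i ∈ Finset.univ.filter (¬ · < s), if i < s then q else if i = s then B else 1)
      = B := by
    rw [Finset.prod_eq_single_of_mem s (by simp) (fun i hi hne => by
      simp only [Finset.mem_filter] at hi
      rw [if_neg hi.2, if_neg hne])]
    rw [if_neg (lt_irrefl s), if_pos rfl]
  rw [h1, h2]

lemma integrable_simpleValue (hint : Integrable id μ) :
    Integrable (simpleValue n T) (Measure.pi fun _ : Fin n => μ) := by
  have hdec : simpleValue n T = fun x =>
      (∑ s : Fin n, Set.indicator {x : Fin n → ℝ | (∀ i, i < s → x i ≤ T) ∧ T < x s}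
        (fun x => (∑ i ∈ Finset.univ.filter fun i => i < s, x i) + ((n:ℝ) - (s:ℕ)) * x s) x)
      + Set.indicator {x : Fin n → ℝ | ∀ i, x i ≤ T} (fun x => ∑ i, x i) x :=
    funext fun x => simpleValue_eq_decomp x
  rw [hdec]
  apply Integrable.add
  · apply integrable_finset_sum
    intro s _
    apply Integrable.indicator
    · exact (integrable_finset_sum _ fun i _ => integrable_comp_eval hint i).add
        ((integrable_comp_eval hint s).const_mul _)
    · exact (measSet_le T s).inter
        (measurableSet_lt measurable_const (measurable_pi_apply s))
  · apply Integrable.indicator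
    · exact integrable_finset_sum _ fun i _ => integrable_comp_eval hint i
    · have : {x : Fin n → ℝ | ∀ i, x i ≤ T} = ⋂ i, {x : Fin n → ℝ | x i ≤ T} := by ext; simp
      rw [this]
      exact MeasurableSet.iInter fun i =>
        measurableSet_le (measurable_pi_apply i) measurable_const

lemma measurable_optValue : Measurable (optValue n) := by
  apply Finset.measurable_sum
  intro i _
  have h := Finset.measurable_sup' (Finset.nonempty_Iic (a := i))
    (f := fun j (x : Fin n → ℝ) => x j) (fun j _ => measurable_pi_apply j)
  convert h using 1
  funext x
  rw [Finset.sup'_apply]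

lemma optValue_le (x : Fin n → ℝ) :
    optValue n x ≤ ∑ i : Fin n, (T + ∑ j ∈ Finset.Iic i, max (x j - T) 0) := by
  apply Finset.sum_le_sum
  intro i _
  obtain ⟨j, hj, hsup⟩ := Finset.exists_mem_eq_sup' (Finset.nonempty_Iic (a := i)) x
  rw [hsup]
  have h1 := le_max_left (x j - T) 0
  have h2 : max (x j - T) 0 ≤ ∑ j' ∈ Finset.Iic i, max (x j' - T) 0 :=
    Finset.single_le_sum (fun k _ => le_max_right (x k - T) 0) hj
  linarith

lemma integrable_optValue (hint : Integrable id μ) :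
    Integrable (optValue n) (Measure.pi fun _ : Fin n => μ) := by
  apply Integrable.mono' (g := fun x => ∑ i : Fin n, ∑ j ∈ Finset.Iic i, |x j|)
  · exact integrable_finset_sum _ fun i _ => integrable_finset_sum _
      fun j _ => integrable_comp_eval hint.abs j
  · exact (measurable_optValue).aestronglyMeasurable
  · apply Filter.Eventually.of_forall
    intro x
    rw [Real.norm_eq_abs]
    calc |optValue n x| ≤ ∑ i : Fin n, |(Finset.Iic i).sup' Finset.nonempty_Iic x| :=
        Finset.abs_sum_le_sum_abs _ _
      _ ≤ ∑ i : Fin n, ∑ j ∈ Finset.Iic i, |x j| := by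
        apply Finset.sum_le_sum
        intro i _
        obtain ⟨j, hj, hsup⟩ := Finset.exists_mem_eq_sup' (Finset.nonempty_Iic (a := i)) x
        rw [hsup]
        exact Finset.single_le_sum (fun k _ => abs_nonneg (x k)) hj

lemma gauss_sum (n : ℕ) : (∑ s ∈ Finset.range n, ((s:ℝ) + 1)) = n * (n + 1) / 2 := by
  induction n with
  | zero => simp
  | succ n ih => rw [Finset.sum_range_succ, ih]; push_cast; ring

end More2


/-- The SIMPLE algorithm with threshold at the `(1 − 2/n)`-quantile achieves, in
expectation, at least a `(1 + e⁻²)/(3 − e⁻²)` fraction of the prophet's expected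
value. -/
theorem simple_prophet_inequality (n : ℕ) (hn : 2 ≤ n)
    (μ : Measure ℝ) [IsProbabilityMeasure μ]
    (hneg : μ (Set.Iio 0) = 0) (hint : Integrable id μ)
    (T : ℝ) (hT : 0 ≤ T) (hTq : μ (Set.Ioi T) = ENNReal.ofReal (2 / n)) :
    (∫ x, simpleValue n T x ∂(Measure.pi fun _ : Fin n => μ))
      ≥ ((1 + Real.exp (-2)) / (3 - Real.exp (-2))) *
        ∫ x, optValue n x ∂(Measure.pi fun _ : Fin n => μ) := by
  have hn' : (2:ℝ) ≤ (n:ℝ) := by exact_mod_cast hn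
  have hn0 : (0:ℝ) < n := by linarith
  have hn2 : 2/(n:ℝ) ≤ 1 := by rw [div_le_one hn0]; linarith
  have hn2' : (0:ℝ) ≤ 2/(n:ℝ) := by positivity
  set P := Measure.pi fun _ : Fin n => μ with hP
  set c := (1 + Real.exp (-2)) / (3 - Real.exp (-2)) with hc
  have hc0 : 0 ≤ c := by
    have he := expNeg2_le
    have he0 : 0 < Real.exp (-2) := Real.exp_pos _
    apply div_nonneg <;> linarith
  set A := ∫ y, max (y - T) 0 ∂μ with hA
  set b := ∫ y, (if T < y then y else 0) ∂μ with hbdef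
  set q := (μ (Set.Iic T)).toReal with hqdef
  have hA0 : 0 ≤ A := integral_nonneg fun y => le_max_right _ _
  have hb : b = A + T * (2/(n:ℝ)) := b_eq T μ hint hn2' hTq
  have hq : q = 1 - 2/(n:ℝ) := q_eq T μ hn2 hn2' hTq
  set S := ∑ s ∈ Finset.range n, ((n : ℝ) - s) * q ^ s with hSdef
  have hS : (n:ℝ) * (n + 2) / 4 ≤ S := keyLower n hn q hq
  -- lower bound for SIMPLE
  have hIntg : ∀ s : Fin n, Integrable (fun x => ∏ i, gfun n T s i (x i)) P :=
    fun s => integrable_prod_gfun T μ hint s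
  have hlow : ∫ x, simpleValue n T x ∂P ≥ ∫ x, (∑ s : Fin n, ∏ i, gfun n T s i (x i)) ∂P := by
    apply integral_mono_ae (integrable_finset_sum _ fun s _ => hIntg s)
      (integrable_simpleValue T μ hint)
    exact (ae_nonneg hneg).mono fun x hx => lower_pointwise hx
  have hgval : ∫ x, (∑ s : Fin n, ∏ i, gfun n T s i (x i)) ∂P = b * S := by
    rw [integral_finset_sum _ fun s _ => hIntg s]
    have hone : ∀ s : Fin n, ∫ x, (∏ i, gfun n T s i (x i)) ∂P
        = q ^ (s:ℕ) * (((n:ℝ) - (s:ℕ)) * b) := by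
      intro s
      rw [hP, my_integral_pi μ (gfun n T s),
        Finset.prod_congr rfl fun i _ => integral_gfun T μ hint s i]
      exact prod_integral_gfun s q (((n:ℝ) - (s:ℕ)) * b)
    rw [Finset.sum_congr rfl fun s _ => hone s]
    rw [Fin.sum_univ_eq_sum_range (fun s : ℕ => q ^ s * (((n:ℝ) - s) * b)) n]
    rw [hSdef, Finset.mul_sum]
    exact Finset.sum_congr rfl fun s _ => by ring
  -- upper bound for OPT
  have hIntBound : Integrable (fun x : Fin n → ℝ =>
      ∑ i : Fin n, (T + ∑ j ∈ Finset.Iic i, max (x j - T) 0)) P := by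
    apply integrable_finset_sum
    intro i _
    exact (integrable_const T).add (integrable_finset_sum _
      fun j _ => integrable_comp_eval (integrable_pospart T μ hint) j)
  have hoptle : ∫ x, optValue n x ∂P ≤ (n:ℝ) * T + A * ((n:ℝ)*(n+1)/2) := by
    have h1 : ∫ x, optValue n x ∂P ≤ ∫ x, (∑ i : Fin n,
        (T + ∑ j ∈ Finset.Iic i, max (x j - T) 0)) ∂P :=
      integral_mono (integrable_optValue μ hint) hIntBound (fun x => optValue_le T x)
    have h2 : ∫ x, (∑ i : Fin n, (T + ∑ j ∈ Finset.Iic i, max (x j - T) 0)) ∂P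
        = (n:ℝ) * T + A * ((n:ℝ)*(n+1)/2) := by
      have hmax_int : ∀ j : Fin n, Integrable (fun x : Fin n → ℝ => max (x j - T) 0) P :=
        fun j => integrable_comp_eval (integrable_pospart T μ hint) j
      have hinner_int : ∀ i : Fin n,
          Integrable (fun x : Fin n → ℝ => ∑ j ∈ Finset.Iic i, max (x j - T) 0) P :=
        fun i => integrable_finset_sum _ fun j _ => hmax_int j
      have hsum_int : ∀ i ∈ (Finset.univ : Finset (Fin n)),
          Integrable (fun x : Fin n → ℝ => T + ∑ j ∈ Finset.Iic i, max (x j - T) 0) P :=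
        fun i _ => (integrable_const T).add (hinner_int i)
      rw [integral_finset_sum _ hsum_int]
      have hterm : ∀ i : Fin n, ∫ x, (T + ∑ j ∈ Finset.Iic i, max (x j - T) 0) ∂P
          = T + ((i:ℕ) + 1 : ℝ) * A := by
        intro i
        rw [integral_add (integrable_const T) (hinner_int i), integral_const,
          integral_finset_sum _ fun j _ => hmax_int j]
        have : ∀ j : Fin n, ∫ x : Fin n → ℝ, max (x j - T) 0 ∂P = A :=
          fun j => integral_comp_eval
            ((measurable_id.sub_const T).max measurable_const).aestronglyMeasurable j
        rw [Finset.sum_congr rfl fun j _ => this j, Finset.sum_const, Fin.card_Iic,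
          nsmul_eq_mul]
        simp [measure_univ]
      rw [Finset.sum_congr rfl fun i _ => hterm i, Finset.sum_add_distrib,
        Finset.sum_const, Finset.card_univ, Fintype.card_fin, nsmul_eq_mul]
      rw [Fin.sum_univ_eq_sum_range (fun i : ℕ => ((i:ℝ) + 1) * A) n]
      rw [← Finset.sum_mul, gauss_sum]
      ring
    linarith
  -- combine
  have hcomb : c * ((n:ℝ)*T + A*((n:ℝ)*(n+1)/2)) ≤ (A + (2/(n:ℝ))*T) * S :=
    combineIneq n hn T A S hT hA0 hS
  have hbS : b * S = (A + (2/(n:ℝ))*T) * S := by rw [hb]; ring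
  have final : c * ∫ x, optValue n x ∂P ≤ ∫ x, simpleValue n T x ∂P := by
    calc c * ∫ x, optValue n x ∂P ≤ c * ((n:ℝ)*T + A*((n:ℝ)*(n+1)/2)) :=
        mul_le_mul_of_nonneg_left hoptle hc0
      _ ≤ (A + (2/(n:ℝ))*T) * S := hcomb
      _ = b * S := hbS.symm
      _ = ∫ x, (∑ s : Fin n, ∏ i, gfun n T s i (x i)) ∂P := hgval.symm
      _ ≤ ∫ x, simpleValue n T x ∂P := hlow
  exact final
end

section
/- Let μ be a probability measure on the reals with μ((-∞,0)) = 0 and finite first moment. Define G : ℕ → ℝ recursively by G(0) = 0 and, for n ≥ 1, G(n) = ∫ max_{t ∈ {1,…,n}} ( t·x + G(n−t) ) dμ(x). Then the sequence n ↦ G(n)/n is non-decreasing for n ≥ 1; equivalently, for every n ≥ 2, (n−1)·G(n) ≥ n·G(n−1). -/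
open MeasureTheory

/-- Integrability of a finite sup' of integrable functions. -/
lemma integrable_sup'_aux {μ : Measure ℝ} (s : Finset ℕ) (hs : s.Nonempty)
    (f : ℕ → ℝ → ℝ) :
    (∀ t ∈ s, Integrable (f t) μ) →
    Integrable (fun x => s.sup' hs (fun t => f t x)) μ := by
  induction hs using Finset.Nonempty.cons_induction with
  | singleton a =>
    intro hf
    simp only [Finset.sup'_singleton]
    exact hf a (Finset.mem_singleton_self a)
  | cons a s ha hsn ih =>
    intro hf
    simp only [Finset.sup'_cons hsn]
    exact (hf a (by simp)).sup (ih (fun t ht => hf t (Finset.mem_cons_of_mem ht)))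

/-- The per-step average value `G n / n` of the optimal online procedure for the
prophet-inequality over time is non-decreasing: `(n−1)·G n ≥ n·G (n−1)` for `n ≥ 2`. -/
theorem optimal_average_monotone (μ : Measure ℝ) [IsProbabilityMeasure μ]
    (hneg : μ (Set.Iio 0) = 0) (hint : Integrable id μ)
    (G : ℕ → ℝ) (hG0 : G 0 = 0)
    (hG : ∀ (n : ℕ) (hn : 1 ≤ n),
      G n = ∫ x, (Finset.Icc 1 n).sup' (Finset.nonempty_Icc.mpr hn)
        (fun t => (t : ℝ) * x + G (n - t)) ∂μ) :
    ∀ n : ℕ, 2 ≤ n → ((n : ℝ) - 1) * G n ≥ (n : ℝ) * G (n - 1) := by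
  have hInt : ∀ (n : ℕ) (hn : 1 ≤ n),
      Integrable (fun x => (Finset.Icc 1 n).sup' (Finset.nonempty_Icc.mpr hn)
        (fun t => (t : ℝ) * x + G (n - t))) μ := by
    intro n hn
    exact integrable_sup'_aux _ _ _
      (fun t _ => (hint.const_mul (t : ℝ)).add (integrable_const _))
  intro n
  induction n using Nat.strong_induction_on with
  | _ n IH =>
    intro hn2
    have hn1 : 1 ≤ n - 1 := by omega
    have hn1' : 1 ≤ n := by omega
    set fN : ℝ → ℝ := fun x => (Finset.Icc 1 n).sup' (Finset.nonempty_Icc.mpr hn1')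
        (fun t => (t : ℝ) * x + G (n - t)) with hfN
    set fM : ℝ → ℝ := fun x => (Finset.Icc 1 (n-1)).sup' (Finset.nonempty_Icc.mpr hn1)
        (fun t => (t : ℝ) * x + G (n - 1 - t)) with hfM
    -- pointwise inequality
    have hpt : ∀ x : ℝ, (n : ℝ) * fM x ≤ ((n : ℝ) - 1) * fN x := by
      intro x
      obtain ⟨t, ht, hteq⟩ := Finset.exists_mem_eq_sup' (Finset.nonempty_Icc.mpr hn1)
        (fun t => (t : ℝ) * x + G (n - 1 - t))
      rw [Finset.mem_Icc] at ht
      have htn : (t : ℝ) ≤ (n : ℝ) - 1 := by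
        have h2 : t + 1 ≤ n := by omega
        have h3 : (t : ℝ) + 1 ≤ (n : ℝ) := by exact_mod_cast h2
        linarith
      have hA : (t : ℝ) * x + G (n - t) ≤ fN x := by
        have hmem : t ∈ Finset.Icc 1 n := Finset.mem_Icc.mpr ⟨ht.1, by omega⟩
        exact Finset.le_sup' (fun t : ℕ => (t : ℝ) * x + G (n - t)) hmem
      have hB : ((t + 1 : ℕ) : ℝ) * x + G (n - (t + 1)) ≤ fN x := by
        have hmem : t + 1 ∈ Finset.Icc 1 n := Finset.mem_Icc.mpr ⟨by omega, by omega⟩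
        exact Finset.le_sup' (fun t : ℕ => (t : ℝ) * x + G (n - t)) hmem
      have hsub : n - (t + 1) = n - 1 - t := by omega
      rw [hsub] at hB
      push_cast at hB
      have hc1 : (0 : ℝ) ≤ (n : ℝ) - 1 - (t : ℝ) := by linarith
      have hc2 : (0 : ℝ) ≤ (t : ℝ) := Nat.cast_nonneg t
      -- key inequality from induction hypothesis
      have key : ((n : ℝ) - (t : ℝ)) * G (n - 1 - t) ≤ ((n : ℝ) - 1 - (t : ℝ)) * G (n - t) := by
        by_cases h : t = n - 1
        · have h1 : n - 1 - t = 0 := by omega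
          have h2 : ((n : ℝ) - 1 - (t : ℝ)) = 0 := by
            have : (t : ℝ) = (n : ℝ) - 1 := by
              subst h
              push_cast [Nat.cast_sub hn1']; ring
            linarith
          rw [h1, hG0, h2]; simp
        · set m := n - t with hm
          have hm2 : 2 ≤ m := by omega
          have hmn : m < n := by omega
          have hIH := IH m hmn hm2
          have hmc : ((m : ℕ) : ℝ) = (n : ℝ) - (t : ℝ) := by
            rw [hm, Nat.cast_sub (by omega)]
          have hm1 : m - 1 = n - 1 - t := by omega
          rw [hm1, hmc] at hIH
          have : ((n : ℝ) - (t : ℝ)) - 1 = (n : ℝ) - 1 - (t : ℝ) := by ring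
          linarith [hIH]
      have h1 : ((n : ℝ) - 1 - (t : ℝ)) * ((t : ℝ) * x + G (n - t))
          ≤ ((n : ℝ) - 1 - (t : ℝ)) * fN x := mul_le_mul_of_nonneg_left hA hc1
      have h2 : (t : ℝ) * (((t : ℝ) + 1) * x + G (n - 1 - t))
          ≤ (t : ℝ) * fN x := mul_le_mul_of_nonneg_left hB hc2
      have hexp : ((n : ℝ) - 1 - (t : ℝ)) * ((t : ℝ) * x + G (n - t))
          + (t : ℝ) * (((t : ℝ) + 1) * x + G (n - 1 - t))
          = (n : ℝ) * (t : ℝ) * x + ((n : ℝ) - 1 - (t : ℝ)) * G (n - t)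
            + (t : ℝ) * G (n - 1 - t) := by ring
      have hMx : fM x = (t : ℝ) * x + G (n - 1 - t) := hteq
      have hgoal : (n : ℝ) * fM x = (n : ℝ) * (t : ℝ) * x + (n : ℝ) * G (n - 1 - t) := by
        rw [hMx]; ring
      rw [hgoal]
      nlinarith [h1, h2, key, hexp]
    -- integrate
    have hIN := hInt n hn1'
    have hIM := hInt (n - 1) hn1
    rw [hG n hn1', hG (n - 1) hn1]
    have hmono : ∫ x, (n : ℝ) * fM x ∂μ ≤ ∫ x, ((n : ℝ) - 1) * fN x ∂μ :=
      integral_mono (hIM.const_mul _) (hIN.const_mul _) hpt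
    rw [integral_const_mul, integral_const_mul] at hmono
    exact hmono
end

section
/- Let n ≥ 2 be a natural number and let G(0), G(1), …, G(n−1) be nonnegative reals with G(0) = 0 such that the quantities τ_k := G(k)/k (with τ_0 := 0) are non-decreasing in k for 0 ≤ k ≤ n−1. Let x ≥ 0 be a real number. (a) If x > G(n−1)/(n−1), then for every t ∈ {1,…,n}, t·x + G(n−t) ≤ n·x. (b) If x ≤ G(n−1)/(n−1), then for every t ∈ {1,…,n}, t·x + G(n−t) ≤ x + G(n−1). -/
/-- Structural core of the optimality of the online algorithm: if the per-step
averages `G k / k` (with `G 0 / 0 = 0` by convention) are non-decreasing up to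
`n − 1`, then in the dynamic program `max_{t ∈ {1,…,n}} (t·x + G (n−t))` the maximum
is attained at `t = n` when `x > G (n−1)/(n−1)` and at `t = 1` otherwise. -/
theorem optimal_decision_structure (n : ℕ) (hn : 2 ≤ n) (G : ℕ → ℝ)
    (hGnonneg : ∀ k, k ≤ n - 1 → 0 ≤ G k) (hG0 : G 0 = 0)
    (hmono : ∀ j k : ℕ, j ≤ k → k ≤ n - 1 → G j / (j : ℝ) ≤ G k / (k : ℝ))
    (x : ℝ) (hx : 0 ≤ x) :
    (G (n - 1) / ((n - 1 : ℕ) : ℝ) < x →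
      ∀ t ∈ Finset.Icc 1 n, (t : ℝ) * x + G (n - t) ≤ (n : ℝ) * x) ∧
    (x ≤ G (n - 1) / ((n - 1 : ℕ) : ℝ) →
      ∀ t ∈ Finset.Icc 1 n, (t : ℝ) * x + G (n - t) ≤ x + G (n - 1)) := by
  set τ : ℝ := G (n - 1) / ((n - 1 : ℕ) : ℝ) with hτ
  have hm1 : 1 ≤ n - 1 := by omega
  have hm1pos : (0:ℝ) < ((n - 1 : ℕ) : ℝ) := by exact_mod_cast Nat.pos_of_ne_zero (by omega)
  have hτnonneg : 0 ≤ τ := div_nonneg (hGnonneg _ le_rfl) hm1pos.le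
  have hGn1 : G (n - 1) = ((n - 1 : ℕ) : ℝ) * τ := by
    rw [hτ, mul_div_cancel₀ _ hm1pos.ne']
  have hkey : ∀ k, k ≤ n - 1 → G k ≤ (k : ℝ) * τ := by
    intro k hk
    rcases Nat.eq_zero_or_pos k with rfl | hkpos
    · simp [hG0]
    · have hkpos' : (0:ℝ) < (k:ℝ) := by exact_mod_cast hkpos
      have := hmono k (n - 1) hk le_rfl
      calc G k = (k:ℝ) * (G k / (k:ℝ)) := by field_simp
        _ ≤ (k:ℝ) * τ := by exact mul_le_mul_of_nonneg_left this hkpos'.le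
  constructor
  · intro hlt t ht
    simp only [Finset.mem_Icc] at ht
    have hnt : n - t ≤ n - 1 := by omega
    have h1 : G (n - t) ≤ ((n - t : ℕ) : ℝ) * τ := hkey _ hnt
    have hcast : ((n - t : ℕ) : ℝ) = (n:ℝ) - (t:ℝ) := by
      have : t ≤ n := ht.2
      push_cast [this]; ring
    have hntnn : (0:ℝ) ≤ (n:ℝ) - (t:ℝ) := by
      rw [← hcast]; positivity
    have h2 : ((n:ℝ) - (t:ℝ)) * τ ≤ ((n:ℝ) - (t:ℝ)) * x :=
      mul_le_mul_of_nonneg_left hlt.le hntnn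
    rw [hcast] at h1
    nlinarith
  · intro hle t ht
    simp only [Finset.mem_Icc] at ht
    have hnt : n - t ≤ n - 1 := by omega
    have h1 : G (n - t) ≤ ((n - t : ℕ) : ℝ) * τ := hkey _ hnt
    have hcast : ((n - t : ℕ) : ℝ) = (n:ℝ) - (t:ℝ) := by
      have : t ≤ n := ht.2
      push_cast [this]; ring
    have hcast2 : ((n - 1 : ℕ) : ℝ) = (n:ℝ) - 1 := by
      have : 1 ≤ n := by omega
      push_cast [this]; ring
    have ht1 : (1:ℝ) ≤ (t:ℝ) := by exact_mod_cast ht.1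
    have h2 : ((t:ℝ) - 1) * x ≤ ((t:ℝ) - 1) * τ :=
      mul_le_mul_of_nonneg_left hle (by linarith)
    rw [hcast] at h1
    rw [hGn1, hcast2]
    nlinarith
end

section
/- Let μ be a finite measure on the reals such that the identity function is μ-integrable. Then the function g : ℝ → ℝ defined by g(τ) = ∫_{(-∞,τ]} x dμ(x) − τ·μ((-∞,τ]) is non-increasing (antitone). -/
open MeasureTheory

lemma g_eq (μ : Measure ℝ) [IsFiniteMeasure μ] (hint : Integrable id μ) (τ : ℝ) :
    (∫ x in Set.Iic τ, x ∂μ) - τ * (μ (Set.Iic τ)).toReal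
      = ∫ x in Set.Iic τ, (x - τ) ∂μ := by
  have hid : Integrable (fun x : ℝ => x) μ := hint
  rw [integral_sub hid.restrict (integrable_const τ), integral_const,
    measureReal_restrict_apply_univ, measureReal_def, smul_eq_mul]
  ring

/-- The function `g(τ) = ∫_{(-∞,τ]} x dμ(x) − τ·μ((-∞,τ])` is non-increasing. -/
theorem truncated_mean_defect_antitone (μ : Measure ℝ) [IsFiniteMeasure μ]
    (hint : Integrable id μ) :
    Antitone (fun τ : ℝ => (∫ x in Set.Iic τ, x ∂μ) - τ * (μ (Set.Iic τ)).toReal) := by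
  intro a b hab
  have hid : Integrable (fun x : ℝ => x) μ := hint
  simp only [g_eq μ hint]
  have hIa : Integrable (fun x : ℝ => x - b) (μ.restrict (Set.Iic a)) :=
    hid.restrict.sub (integrable_const b)
  have hIab : Integrable (fun x : ℝ => x - b) (μ.restrict (Set.Ioc a b)) :=
    hid.restrict.sub (integrable_const b)
  have hsplit : (∫ x in Set.Iic b, (x - b) ∂μ)
      = (∫ x in Set.Iic a, (x - b) ∂μ) + ∫ x in Set.Ioc a b, (x - b) ∂μ := by
    rw [← setIntegral_union (Set.Iic_disjoint_Ioc le_rfl) measurableSet_Ioc hIa hIab,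
      Set.Iic_union_Ioc_eq_Iic hab]
  rw [hsplit]
  have h1 : (∫ x in Set.Iic a, (x - b) ∂μ) ≤ ∫ x in Set.Iic a, (x - a) ∂μ := by
    apply setIntegral_mono hIa (hid.restrict.sub (integrable_const a))
    intro x; simp only [Pi.sub_apply]; linarith
  have h2 : (∫ x in Set.Ioc a b, (x - b) ∂μ) ≤ 0 := by
    apply setIntegral_nonpos measurableSet_Ioc
    intro x hx; simp [sub_nonpos, hx.2]
  linarith
end

section
/- For every natural number n ≥ 2, Σ_{i=1}^n (1 − 2/n)^{i−1} · (2/n) · (n − i + 1) ≥ n·(1 + e^{-2})/2 + 1 − 4·e^{-2}. -/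
lemma sum_closed (q : ℝ) : ∀ n : ℕ,
    ∑ k ∈ Finset.range n, q ^ k * (1 - q) * ((n : ℝ) - k) =
      (n : ℝ) - ∑ k ∈ Finset.range n, q ^ (k + 1) := by
  intro n
  induction n with
  | zero => simp
  | succ n ih =>
    have hsplit : ∑ k ∈ Finset.range (n+1), q ^ k * (1 - q) * (((n+1 : ℕ) : ℝ) - k)
        = (∑ k ∈ Finset.range (n+1), q ^ k * (1 - q) * ((n : ℝ) - k))
          + (∑ k ∈ Finset.range (n+1), q ^ k) * (1 - q) := by
      rw [Finset.sum_mul, ← Finset.sum_add_distrib]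
      apply Finset.sum_congr rfl
      intro k _
      push_cast
      ring
    have hlast : ∑ k ∈ Finset.range (n+1), q ^ k * (1 - q) * ((n : ℝ) - k)
        = ∑ k ∈ Finset.range n, q ^ k * (1 - q) * ((n : ℝ) - k) := by
      rw [Finset.sum_range_succ]; simp
    have hgeom : (∑ k ∈ Finset.range (n+1), q ^ k) * (1 - q) = 1 - q ^ (n+1) := by
      have := geom_sum_mul q (n+1)
      nlinarith [this]
    rw [hsplit, hlast, ih, hgeom, Finset.sum_range_succ]
    push_cast
    ring

lemma pow_bound (n : ℕ) (hn : 3 ≤ n) :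
    Real.exp (-2) * (1 - 4 / ((n : ℝ) - 2)) ≤ (1 - 2 / (n : ℝ)) ^ n := by
  have hx : (3 : ℝ) ≤ n := by exact_mod_cast hn
  have hx2 : (0 : ℝ) < (n : ℝ) - 2 := by linarith
  have hxp : (0 : ℝ) < n := by linarith
  -- step 1 : exp (-(2/(n-2))) ≤ 1 - 2/n
  have h1 : 1 + 2 / ((n : ℝ) - 2) ≤ Real.exp (2 / ((n : ℝ) - 2)) := by
    linarith [Real.add_one_le_exp (2 / ((n : ℝ) - 2))]
  have h2 : Real.exp (-(2 / ((n : ℝ) - 2))) ≤ 1 - 2 / (n : ℝ) := by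
    have hpos : (0 : ℝ) < 1 - 2 / (n : ℝ) := by
      rw [sub_pos, div_lt_one hxp]; linarith
    have hid : (1 - 2 / (n : ℝ)) * (1 + 2 / ((n : ℝ) - 2)) = 1 := by
      field_simp
      ring
    have hm : 1 ≤ (1 - 2 / (n : ℝ)) * Real.exp (2 / ((n : ℝ) - 2)) := by
      nlinarith [mul_le_mul_of_nonneg_left h1 hpos.le]
    have hinv : Real.exp (-(2 / ((n : ℝ) - 2))) * Real.exp (2 / ((n : ℝ) - 2)) = 1 := by
      rw [← Real.exp_add]; simp
    nlinarith [Real.exp_pos (2 / ((n : ℝ) - 2))]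
  have h3 : Real.exp (-(2 / ((n : ℝ) - 2))) ^ n ≤ (1 - 2 / (n : ℝ)) ^ n :=
    pow_le_pow_left₀ (Real.exp_nonneg _) h2 n
  have h4 : Real.exp (-(2 / ((n : ℝ) - 2))) ^ n
      = Real.exp (-2) * Real.exp (-(4 / ((n : ℝ) - 2))) := by
    rw [← Real.exp_nat_mul, ← Real.exp_add]
    congr 1
    field_simp
    ring
  have h5 : 1 - 4 / ((n : ℝ) - 2) ≤ Real.exp (-(4 / ((n : ℝ) - 2))) := by
    have := Real.add_one_le_exp (-(4 / ((n : ℝ) - 2)))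
    linarith
  calc Real.exp (-2) * (1 - 4 / ((n : ℝ) - 2))
      ≤ Real.exp (-2) * Real.exp (-(4 / ((n : ℝ) - 2))) := by
        exact mul_le_mul_of_nonneg_left h5 (Real.exp_nonneg _)
    _ = Real.exp (-(2 / ((n : ℝ) - 2))) ^ n := h4.symm
    _ ≤ _ := h3

/-- Analytic core of the lower bound on the SIMPLE algorithm's expected value with
parameter `a = 2`. -/
theorem simple_lower_bound_sum (n : ℕ) (hn : 2 ≤ n) :
    ∑ i ∈ Finset.Icc 1 n,
        (1 - 2 / (n : ℝ)) ^ (i - 1) * (2 / (n : ℝ)) * ((n : ℝ) - (i : ℝ) + 1)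
      ≥ (n : ℝ) * (1 + Real.exp (-2)) / 2 + 1 - 4 * Real.exp (-2) := by
  set q : ℝ := 1 - 2 / (n : ℝ) with hq
  have hnp : (0 : ℝ) < n := by positivity
  have h1q : 1 - q = 2 / (n : ℝ) := by rw [hq]; ring
  have hrw : ∑ i ∈ Finset.Icc 1 n, q ^ (i - 1) * (2 / (n : ℝ)) * ((n : ℝ) - (i : ℝ) + 1)
      = ∑ k ∈ Finset.range n, q ^ k * (1 - q) * ((n : ℝ) - k) := by
    rw [show Finset.Icc 1 n = Finset.Ico 1 (n+1) by rw [Finset.Ico_add_one_right_eq_Icc],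
      Finset.sum_Ico_eq_sum_range]
    apply Finset.sum_congr (by norm_num)
    intro k _
    rw [h1q]
    simp only [Nat.add_sub_cancel_left, Nat.add_sub_cancel]
    push_cast
    ring
  have hclosed := sum_closed q n
  have hgeom : ∑ k ∈ Finset.range n, q ^ (k + 1) = q * ((n : ℝ) * (1 - q ^ n) / 2) := by
    have hg := geom_sum_mul q n
    have : ∑ k ∈ Finset.range n, q ^ (k + 1) = q * ∑ k ∈ Finset.range n, q ^ k := by
      rw [Finset.mul_sum]
      exact Finset.sum_congr rfl fun k _ => by ring
    rw [this]
    have hsum : ∑ k ∈ Finset.range n, q ^ k = (n : ℝ) * (1 - q ^ n) / 2 := by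
      have h2n : q - 1 = -(2 / (n : ℝ)) := by rw [hq]; ring
      rw [h2n] at hg
      field_simp at hg ⊢
      nlinarith [hg]
    rw [hsum]
  rw [hrw, hclosed, hgeom]
  -- goal : n - q * (n * (1 - q^n)/2) ≥ n*(1+E)/2 + 1 - 4E
  have key : ((n : ℝ) - 2) * q ^ n ≥ ((n : ℝ) - 8) * Real.exp (-2) := by
    rcases eq_or_lt_of_le hn with h2 | h3
    · subst h2
      norm_num [hq]
      nlinarith [Real.exp_pos (-2 : ℝ)]
    · have h3' : 3 ≤ n := h3
      have hpb := pow_bound n h3'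
      have hx2 : (0 : ℝ) < (n : ℝ) - 2 := by
        have : (3 : ℝ) ≤ n := by exact_mod_cast h3'
        linarith
      have hmul : ((n : ℝ) - 2) * (Real.exp (-2) * (1 - 4 / ((n : ℝ) - 2)))
          = ((n : ℝ) - 6) * Real.exp (-2) := by
        field_simp
        ring
      nlinarith [Real.exp_pos (-2 : ℝ), mul_le_mul_of_nonneg_left hpb (le_of_lt hx2)]
  have hq_expand : q * ((n : ℝ) * (1 - q ^ n) / 2)
      = ((n : ℝ) - 2) * (1 - q ^ n) / 2 := by
    rw [hq]; field_simp
  rw [hq_expand]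
  linarith [key]
end

section
/- For every natural number n ≥ 2, Σ_{i=1}^n ( (1 − 2/n)^i + 2i/n ) ≤ n·(3 − e^{-2})/2 + 2·e^{-2}. -/
/-- For `v ≥ 1`, `2 log v ≤ v - 1/v`. -/
lemma two_log_le_sub_inv (v : ℝ) (hv : 1 ≤ v) : 2 * Real.log v ≤ v - 1 / v := by
  have hmono : MonotoneOn (fun w : ℝ => w - 1 / w - 2 * Real.log w) (Set.Ici 1) := by
    have hne : ∀ w : ℝ, w ∈ Set.Ici (1:ℝ) → w ≠ 0 := by
      intro w hw; simp only [Set.mem_Ici] at hw; linarith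
    apply monotoneOn_of_deriv_nonneg (convex_Ici 1)
    · apply ContinuousOn.sub
      apply ContinuousOn.sub continuousOn_id
      · exact ContinuousOn.div continuousOn_const continuousOn_id hne
      · exact ContinuousOn.mul continuousOn_const
          (Real.continuousOn_log.mono (by intro w hw; exact hne w hw))
    · intro w hw
      rw [interior_Ici] at hw
      have hw1 : (1:ℝ) < w := hw
      have hw0 : w ≠ 0 := by linarith
      have h : HasDerivAt (fun w : ℝ => w - 1 / w - 2 * Real.log w)
          (1 - (-(w ^ 2)⁻¹) - 2 * w⁻¹) w := by
        have h1 : HasDerivAt (fun w : ℝ => 1 / w) (-(w ^ 2)⁻¹) w := by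
          simpa [one_div] using hasDerivAt_inv hw0
        exact ((hasDerivAt_id w).sub h1).sub ((Real.hasDerivAt_log hw0).const_mul 2)
      exact h.differentiableAt.differentiableWithinAt
    · intro w hw
      rw [interior_Ici] at hw
      have hw1 : (1:ℝ) < w := hw
      have hw0 : w ≠ 0 := by linarith
      have h : HasDerivAt (fun w : ℝ => w - 1 / w - 2 * Real.log w)
          (1 - (-(w ^ 2)⁻¹) - 2 * w⁻¹) w := by
        have h1 : HasDerivAt (fun w : ℝ => 1 / w) (-(w ^ 2)⁻¹) w := by
          simpa [one_div] using hasDerivAt_inv hw0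
        exact ((hasDerivAt_id w).sub h1).sub ((Real.hasDerivAt_log hw0).const_mul 2)
      rw [h.deriv]
      have hw2 : (0:ℝ) < w ^ 2 := by positivity
      have : (1 - (-(w ^ 2)⁻¹) - 2 * w⁻¹) = (w - 1) ^ 2 / w ^ 2 := by
        field_simp; ring
      rw [this]; positivity
  have := hmono (Set.self_mem_Ici) (Set.mem_Ici.mpr hv) hv
  simp only [Real.log_one] at this
  rw [one_div]
  norm_num at this
  linarith

/-- Key inequality: `(x-2) * (1-2/x)^n ≥ (x-4) * exp (-2)` for `x = n ≥ 2`. -/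
lemma key_ineq (n : ℕ) (hn : 2 ≤ n) :
    ((n : ℝ) - 4) * Real.exp (-2) ≤ ((n : ℝ) - 2) * (1 - 2 / (n : ℝ)) ^ n := by
  have hx : (2:ℝ) ≤ (n : ℝ) := by exact_mod_cast hn
  have hx0 : (0:ℝ) < (n : ℝ) := by linarith
  set x : ℝ := (n : ℝ) with hxdef
  set q : ℝ := 1 - 2 / x with hq
  have hq0 : 0 ≤ q := by
    have : 2 / x ≤ 1 := by rw [div_le_one hx0]; linarith
    simp [hq]; linarith
  rcases eq_or_lt_of_le hn with h2 | h3
  · -- n = 2 : RHS nonneg? LHS = -2 e^{-2} ≤ 0 ≤ RHS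
    have : ((n:ℝ) - 4) ≤ 0 := by rw [← h2]; norm_num
    have hE : 0 < Real.exp (-2) := Real.exp_pos _
    nlinarith [pow_nonneg hq0 n]
  · by_cases h4 : (n : ℝ) ≤ 4
    · have hE : 0 < Real.exp (-2) := Real.exp_pos _
      nlinarith [pow_nonneg hq0 n]
    · push_neg at h4
      have hx3 : (3:ℝ) ≤ x := by
        have h3' : 3 ≤ n := h3
        rw [hxdef]
        exact_mod_cast h3'
      have hx2 : (0:ℝ) < x - 2 := by linarith
      have hqpos : 0 < q := by
        have : 2 / x < 1 := by rw [div_lt_one hx0]; linarith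
        simp [hq]; linarith
      have hv : 1 ≤ 1 / q := by
        rw [le_div_iff₀ hqpos]; simp [hq]; positivity
      have hlog := two_log_le_sub_inv (1 / q) hv
      rw [Real.log_div one_ne_zero (ne_of_gt hqpos), Real.log_one] at hlog
      have hinv : 1 / (1 / q) = q := one_div_one_div q
      rw [hinv] at hlog
      -- q ≥ exp ((q - 1/q)/2)
      have hq_ge : Real.exp ((q - 1 / q) / 2) ≤ q := by
        have hlog2 : (q - 1 / q) / 2 ≤ Real.log q := by linarith
        calc Real.exp ((q - 1 / q) / 2) ≤ Real.exp (Real.log q) := Real.exp_le_exp.mpr hlog2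
          _ = q := Real.exp_log hqpos
      have hqn : Real.exp ((q - 1 / q) / 2) ^ n ≤ q ^ n :=
        pow_le_pow_left₀ (le_of_lt (Real.exp_pos _)) hq_ge n
      rw [← Real.exp_nat_mul] at hqn
      have hval : (n : ℝ) * ((q - 1 / q) / 2) = -2 - 2 / (x - 2) := by
        rw [hq]
        field_simp
        ring
      rw [hval] at hqn
      have hsplit : Real.exp (-2 - 2 / (x - 2)) = Real.exp (-2) * Real.exp (-(2 / (x - 2))) := by
        rw [← Real.exp_add]; ring_nf
      have hexp2 : 1 - 2 / (x - 2) ≤ Real.exp (-(2 / (x - 2))) := by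
        have := Real.add_one_le_exp (-(2 / (x - 2)))
        linarith
      have hE : 0 < Real.exp (-2) := Real.exp_pos _
      have h1 : Real.exp (-2) * (1 - 2 / (x - 2)) ≤ q ^ n := by
        calc Real.exp (-2) * (1 - 2 / (x - 2)) ≤ Real.exp (-2) * Real.exp (-(2 / (x - 2))) := by
              exact mul_le_mul_of_nonneg_left hexp2 (le_of_lt hE)
          _ = Real.exp (-2 - 2 / (x - 2)) := hsplit.symm
          _ ≤ q ^ n := hqn
      have h2 : (x - 2) * (Real.exp (-2) * (1 - 2 / (x - 2))) = (x - 4) * Real.exp (-2) := by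
        field_simp
        ring
      calc (x - 4) * Real.exp (-2) = (x - 2) * (Real.exp (-2) * (1 - 2 / (x - 2))) := h2.symm
        _ ≤ (x - 2) * q ^ n := mul_le_mul_of_nonneg_left h1 (le_of_lt hx2)

/-- Analytic core of the upper bound on the prophet's expected value with
parameter `a = 2`. -/
theorem opt_upper_bound_sum (n : ℕ) (hn : 2 ≤ n) :
    ∑ i ∈ Finset.Icc 1 n, ((1 - 2 / (n : ℝ)) ^ i + 2 * (i : ℝ) / (n : ℝ))
      ≤ (n : ℝ) * (3 - Real.exp (-2)) / 2 + 2 * Real.exp (-2) := by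
  have hx : (2:ℝ) ≤ (n : ℝ) := by exact_mod_cast hn
  have hx0 : (0:ℝ) < (n : ℝ) := by linarith
  have hxne : (n : ℝ) ≠ 0 := ne_of_gt hx0
  set x : ℝ := (n : ℝ) with hxdef
  set q : ℝ := 1 - 2 / x with hq
  have hq1 : q < 1 := by
    have : 0 < 2 / x := by positivity
    simp [hq]; linarith
  have hqne : q ≠ 1 := ne_of_lt hq1
  -- split the sum
  rw [Finset.sum_add_distrib]
  -- arithmetic part
  have hA : ∑ i ∈ Finset.Icc 1 n, 2 * (i : ℝ) / x = x + 1 := by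
    have h1 : ∑ i ∈ Finset.Icc 1 n, 2 * (i : ℝ) / x
        = (2 / x) * ∑ i ∈ Finset.Icc 1 n, (i : ℝ) := by
      rw [Finset.mul_sum]; apply Finset.sum_congr rfl; intro i _; ring
    have h2 : ∑ i ∈ Finset.Icc 1 n, (i : ℝ) = (∑ i ∈ Finset.Icc 1 n, i : ℕ) := by
      push_cast; rfl
    have h3 : (∑ i ∈ Finset.Icc 1 n, i) * 2 = n * (n + 1) := by
      have e1 : Finset.Icc 1 n = Finset.Ico 1 (n + 1) := by
        ext i; simp [Nat.lt_succ_iff]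
      have e2 : ∑ i ∈ Finset.range (n + 1), i = ∑ i ∈ Finset.Ico 1 (n + 1), i := by
        rw [Finset.range_eq_Ico, Finset.sum_eq_sum_Ico_succ_bot (Nat.succ_pos n)]
        simp
      rw [e1, ← e2, Finset.sum_range_id_mul_two]
      simp [Nat.mul_comm]
    have h4 : ((∑ i ∈ Finset.Icc 1 n, i : ℕ) : ℝ) = x * (x + 1) / 2 := by
      have := congrArg (fun m : ℕ => (m : ℝ)) h3
      push_cast at this
      rw [hxdef]; linarith
    rw [h1, h2, h4]
    field_simp
  -- geometric part
  have hG : ∑ i ∈ Finset.Icc 1 n, q ^ i = q * ((q ^ n - 1) / (q - 1)) := by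
    have h1 : Finset.Icc 1 n = Finset.Ico 1 (n + 1) := by
      ext i; simp [Nat.lt_succ_iff]
    rw [h1, Finset.sum_Ico_eq_sum_range]
    simp only [Nat.add_sub_cancel]
    rw [← geom_sum_eq hqne n, Finset.mul_sum]
    apply Finset.sum_congr rfl
    intro i _
    rw [pow_add, pow_one]
  have hq1' : q - 1 = -(2 / x) := by rw [hq]; ring
  have hkey := key_ineq n hn
  have hqn1 : q ^ n ≤ 1 := by
    apply pow_le_one₀ _ (le_of_lt hq1)
    have : 2 / x ≤ 1 := by rw [div_le_one hx0]; linarith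
    rw [hq]; linarith
  have hG2 : ∑ i ∈ Finset.Icc 1 n, q ^ i = (x - 2) / 2 * (1 - q ^ n) := by
    rw [hG, hq1', hq]
    field_simp
    ring
  rw [hA, hG2]
  have hE : 0 < Real.exp (-2) := Real.exp_pos _
  rw [hxdef] at *
  nlinarith [hkey]
end

section
/- (Advanced lower bound on the weighted mediant.) Let n ≥ 1 be a natural number, let a_1,…,a_n be nonnegative reals, let b_1,…,b_n be positive reals, and let w_1,…,w_n be positive reals that are non-increasing (w_1 ≥ w_2 ≥ … ≥ w_n). Then ( Σ_{i=1}^n w_i a_i ) / ( Σ_{i=1}^n w_i b_i ) ≥ min_{s ∈ {1,…,n}} ( Σ_{i=1}^{s} a_i ) / ( Σ_{i=1}^{s} b_i ). -/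
/-- Advanced lower bound on the weighted mediant: for nonnegative `a i`, positive
`b i` and non-increasing positive weights `w i`, the weighted mediant is at least
the minimum prefix mediant. -/
theorem weighted_mediant_lower_bound (n : ℕ) (hn : 1 ≤ n) (a b w : ℕ → ℝ)
    (ha : ∀ i ∈ Finset.Icc 1 n, 0 ≤ a i)
    (hb : ∀ i ∈ Finset.Icc 1 n, 0 < b i)
    (hw : ∀ i ∈ Finset.Icc 1 n, 0 < w i)
    (hwmono : ∀ i j, 1 ≤ i → i ≤ j → j ≤ n → w j ≤ w i) :
    (∑ i ∈ Finset.Icc 1 n, w i * a i) / (∑ i ∈ Finset.Icc 1 n, w i * b i)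
      ≥ (Finset.Icc 1 n).inf' (Finset.nonempty_Icc.mpr hn)
          (fun s => (∑ i ∈ Finset.Icc 1 s, a i) / (∑ i ∈ Finset.Icc 1 s, b i)) := by
  set m := (Finset.Icc 1 n).inf' (Finset.nonempty_Icc.mpr hn)
      (fun s => (∑ i ∈ Finset.Icc 1 s, a i) / (∑ i ∈ Finset.Icc 1 s, b i)) with hm
  have hB : ∀ s ∈ Finset.Icc 1 n, 0 < ∑ i ∈ Finset.Icc 1 s, b i := by
    intro s hs
    rw [Finset.mem_Icc] at hs
    apply Finset.sum_pos
    · intro i hi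
      rw [Finset.mem_Icc] at hi
      exact hb i (Finset.mem_Icc.mpr ⟨hi.1, hi.2.trans hs.2⟩)
    · exact Finset.nonempty_Icc.mpr hs.1
  have hpre : ∀ s ∈ Finset.Icc 1 n,
      m * (∑ i ∈ Finset.Icc 1 s, b i) ≤ ∑ i ∈ Finset.Icc 1 s, a i := by
    intro s hs
    have h : m ≤ (∑ i ∈ Finset.Icc 1 s, a i) / (∑ i ∈ Finset.Icc 1 s, b i) :=
      Finset.inf'_le _ hs
    exact (le_div_iff₀ (hB s hs)).mp h
  set c : ℕ → ℝ := fun s => if s = n then w n else w s - w (s + 1) with hc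
  have hc0 : ∀ s ∈ Finset.Icc 1 n, 0 ≤ c s := by
    intro s hs
    rw [Finset.mem_Icc] at hs
    simp only [hc]
    split
    · exact (hw n (Finset.mem_Icc.mpr ⟨hn, le_refl n⟩)).le
    · rename_i hne
      have hsn : s + 1 ≤ n := by omega
      have := hwmono s (s + 1) hs.1 (Nat.le_succ s) hsn
      linarith
  have hwc : ∀ i, 1 ≤ i → i ≤ n → w i = ∑ s ∈ Finset.Icc i n, c s := by
    intro i hi1 hin
    obtain ⟨k, hk⟩ : ∃ k, n - i = k := ⟨n - i, rfl⟩
    induction k generalizing i with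
    | zero =>
      have : i = n := by omega
      subst this
      simp [hc]
    | succ k ih =>
      have hlt : i < n := by omega
      have hsplit : Finset.Icc i n = insert i (Finset.Icc (i + 1) n) := by
        ext x; simp [Finset.mem_Icc]; omega
      rw [hsplit, Finset.sum_insert (by simp [Finset.mem_Icc])]
      have hrec := ih (i + 1) (by omega) (by omega) (by omega)
      rw [← hrec]
      simp only [hc]
      rw [if_neg (by omega)]
      ring
  have key : ∀ f : ℕ → ℝ, ∑ i ∈ Finset.Icc 1 n, w i * f i
      = ∑ s ∈ Finset.Icc 1 n, c s * ∑ i ∈ Finset.Icc 1 s, f i := by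
    intro f
    have h1 : ∀ i ∈ Finset.Icc 1 n, w i * f i
        = ∑ s ∈ Finset.Icc 1 n, (if i ≤ s then c s * f i else 0) := by
      intro i hi
      rw [Finset.mem_Icc] at hi
      rw [hwc i hi.1 hi.2, Finset.sum_mul]
      rw [← Finset.sum_filter]
      congr 1
      ext x; simp [Finset.mem_Icc]; omega
    rw [Finset.sum_congr rfl h1, Finset.sum_comm]
    apply Finset.sum_congr rfl
    intro s hs
    rw [Finset.mem_Icc] at hs
    rw [Finset.mul_sum, ← Finset.sum_filter]
    congr 1
    ext x; simp [Finset.mem_Icc]; omega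
  have hWb : 0 < ∑ i ∈ Finset.Icc 1 n, w i * b i := by
    apply Finset.sum_pos
    · intro i hi; exact mul_pos (hw i hi) (hb i hi)
    · exact Finset.nonempty_Icc.mpr hn
  rw [ge_iff_le, le_div_iff₀ hWb]
  rw [key a, key b, Finset.mul_sum]
  apply Finset.sum_le_sum
  intro s hs
  calc m * (c s * ∑ i ∈ Finset.Icc 1 s, b i)
      = c s * (m * ∑ i ∈ Finset.Icc 1 s, b i) := by ring
    _ ≤ c s * ∑ i ∈ Finset.Icc 1 s, a i :=
        mul_le_mul_of_nonneg_left (hpre s hs) (hc0 s hs)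
end

section
/- For every fixed real constant a ≥ 0, the sequence n ↦ n·( 1 + (1 − 1/n²)^{a·n} · (n² − 1) · ln(1 − 1/n²) ), over natural numbers n ≥ 2, converges to a as n → ∞. -/
open Filter

private lemma aux_log_le {x : ℝ} (hx : 0 < x) (hx1 : x < 1) : Real.log (1 - x) ≤ -x := by
  have h : (0:ℝ) < 1 - x := by linarith
  have := Real.log_le_sub_one_of_pos h
  linarith

private lemma aux_le_log {x : ℝ} (hx : 0 < x) (hx1 : x < 1) :
    -(x / (1 - x)) ≤ Real.log (1 - x) := by
  have h : (0:ℝ) < 1 - x := by linarith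
  have h2 : (0:ℝ) < (1 - x)⁻¹ := by positivity
  have h3 := Real.log_le_sub_one_of_pos h2
  rw [Real.log_inv] at h3
  have heq : (1-x)⁻¹ - 1 = x / (1-x) := by field_simp; ring
  linarith [heq ▸ h3]

/-- `1/n² → 0`. -/
private lemma aux_inv_sq : Tendsto (fun n : ℕ => 1 / (n:ℝ)^2) atTop (nhds 0) := by
  have h := (tendsto_one_div_atTop_nhds_zero_nat : Tendsto (fun n : ℕ => 1 / (n:ℝ)) atTop (nhds 0)).mul (tendsto_one_div_atTop_nhds_zero_nat : Tendsto (fun n : ℕ => 1 / (n:ℝ)) atTop (nhds 0))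
  rw [show (0:ℝ) * 0 = 0 by ring] at h
  refine h.congr (fun n => ?_)
  rw [div_mul_div_comm, one_mul, sq]

/-- base `1 - 1/n² → 1`. -/
private lemma aux_base : Tendsto (fun n : ℕ => 1 - 1 / (n:ℝ)^2) atTop (nhds 1) := by
  have := aux_inv_sq
  have h := (tendsto_const_nhds (x := (1:ℝ)) (f := atTop (α := ℕ))).sub this
  simpa using h

/-- `n² log(1-1/n²) → -1`. -/
private lemma aux_sqL :
    Tendsto (fun n : ℕ => (n:ℝ)^2 * Real.log (1 - 1/(n:ℝ)^2)) atTop (nhds (-1)) := by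
  have hlow : Tendsto (fun n : ℕ => -(1 - 1/(n:ℝ)^2)⁻¹) atTop (nhds (-1)) := by
    have := (aux_base.inv₀ one_ne_zero).neg
    simpa using this
  refine tendsto_of_tendsto_of_tendsto_of_le_of_le' hlow tendsto_const_nhds ?_ ?_
  · filter_upwards [eventually_ge_atTop 2] with n hn
    have hm : (2:ℝ) ≤ (n:ℝ) := by exact_mod_cast hn
    have hm2 : (1:ℝ) < (n:ℝ)^2 := by nlinarith
    have hu0 : (0:ℝ) < 1/(n:ℝ)^2 := by positivity
    have hu1 : 1/(n:ℝ)^2 < 1 := by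
      rw [div_lt_one (by positivity)]; linarith
    have h := aux_le_log hu0 hu1
    have hne : (n:ℝ)^2 ≠ 0 := by positivity
    have heq : -(1 - 1/(n:ℝ)^2)⁻¹ = (n:ℝ)^2 * (-( (1/(n:ℝ)^2) / (1 - 1/(n:ℝ)^2))) := by
      field_simp
    rw [heq]
    exact mul_le_mul_of_nonneg_left h (by positivity)
  · filter_upwards [eventually_ge_atTop 2] with n hn
    have hm : (2:ℝ) ≤ (n:ℝ) := by exact_mod_cast hn
    have hm2 : (1:ℝ) < (n:ℝ)^2 := by nlinarith
    have hu0 : (0:ℝ) < 1/(n:ℝ)^2 := by positivity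
    have hu1 : 1/(n:ℝ)^2 < 1 := by
      rw [div_lt_one (by positivity)]; linarith
    have h := aux_log_le hu0 hu1
    have := mul_le_mul_of_nonneg_left h (le_of_lt (by positivity : (0:ℝ) < (n:ℝ)^2))
    have hne : (n:ℝ)^2 ≠ 0 := by positivity
    calc (n:ℝ)^2 * Real.log (1 - 1/(n:ℝ)^2) ≤ (n:ℝ)^2 * (-(1/(n:ℝ)^2)) := this
      _ = -1 := by field_simp

/-- `log(1-1/n²) → 0`. -/
private lemma aux_L0 :
    Tendsto (fun n : ℕ => Real.log (1 - 1/(n:ℝ)^2)) atTop (nhds 0) := by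
  have h := (Real.continuousAt_log one_ne_zero).tendsto.comp aux_base
  simpa [Function.comp_def] using h

/-- `(n²-1) log(1-1/n²) → -1`. -/
private lemma aux_Q :
    Tendsto (fun n : ℕ => ((n:ℝ)^2 - 1) * Real.log (1 - 1/(n:ℝ)^2)) atTop (nhds (-1)) := by
  have h := aux_sqL.sub aux_L0
  have h2 : Tendsto (fun n : ℕ => (n:ℝ)^2 * Real.log (1 - 1/(n:ℝ)^2)
      - Real.log (1 - 1/(n:ℝ)^2)) atTop (nhds (-1)) := by simpa using h
  exact h2.congr (fun n => by ring)

/-- `n(1 + (n²-1) log(1-1/n²)) → 0`. -/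
private lemma aux_A :
    Tendsto (fun n : ℕ => (n:ℝ) * (1 + ((n:ℝ)^2 - 1) * Real.log (1 - 1/(n:ℝ)^2)))
      atTop (nhds 0) := by
  refine tendsto_of_tendsto_of_tendsto_of_le_of_le' tendsto_const_nhds
    tendsto_one_div_atTop_nhds_zero_nat ?_ ?_
  · filter_upwards [eventually_ge_atTop 2] with n hn
    have hm : (2:ℝ) ≤ (n:ℝ) := by exact_mod_cast hn
    have hm2 : (1:ℝ) < (n:ℝ)^2 := by nlinarith
    have hu0 : (0:ℝ) < 1/(n:ℝ)^2 := by positivity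
    have hu1 : 1/(n:ℝ)^2 < 1 := by rw [div_lt_one (by positivity)]; linarith
    have h := aux_le_log hu0 hu1
    -- (n²-1) L ≥ -1
    have key : -1 ≤ ((n:ℝ)^2 - 1) * Real.log (1 - 1/(n:ℝ)^2) := by
      have h2 := mul_le_mul_of_nonneg_left h (le_of_lt (by linarith : (0:ℝ) < (n:ℝ)^2 - 1))
      have heq : ((n:ℝ)^2 - 1) * (-( (1/(n:ℝ)^2) / (1 - 1/(n:ℝ)^2))) = -1 := by
        have hne : (n:ℝ)^2 ≠ 0 := by positivity
        have hne2 : (n:ℝ)^2 - 1 ≠ 0 := by linarith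
        field_simp
      linarith [heq ▸ h2]
    have : 0 ≤ 1 + ((n:ℝ)^2 - 1) * Real.log (1 - 1/(n:ℝ)^2) := by linarith
    positivity
  · filter_upwards [eventually_ge_atTop 2] with n hn
    have hm : (2:ℝ) ≤ (n:ℝ) := by exact_mod_cast hn
    have hm2 : (1:ℝ) < (n:ℝ)^2 := by nlinarith
    have hu0 : (0:ℝ) < 1/(n:ℝ)^2 := by positivity
    have hu1 : 1/(n:ℝ)^2 < 1 := by rw [div_lt_one (by positivity)]; linarith
    have h := aux_log_le hu0 hu1
    have h2 := mul_le_mul_of_nonneg_left h (le_of_lt (by linarith : (0:ℝ) < (n:ℝ)^2 - 1))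
    have hne : (n:ℝ)^2 ≠ 0 := by positivity
    have key : 1 + ((n:ℝ)^2 - 1) * Real.log (1 - 1/(n:ℝ)^2) ≤ 1/(n:ℝ)^2 := by
      have heq : ((n:ℝ)^2 - 1) * (-(1/(n:ℝ)^2)) = 1/(n:ℝ)^2 - 1 := by field_simp; ring
      linarith [heq ▸ h2]
    have hn0 : (0:ℝ) < (n:ℝ) := by linarith
    calc (n:ℝ) * (1 + ((n:ℝ)^2 - 1) * Real.log (1 - 1/(n:ℝ)^2))
        ≤ (n:ℝ) * (1/(n:ℝ)^2) := mul_le_mul_of_nonneg_left key (le_of_lt hn0)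
      _ = 1/(n:ℝ) := by field_simp

/-- Auxiliary limit: `n·(1 + (1 − 1/n²)^(a·n)·(n² − 1)·ln(1 − 1/n²)) → a` as `n → ∞`,
where the power is the real-exponent power `rpow`. -/
theorem tendsto_n_one_add_rpow_mul_log (a : ℝ) (ha : 0 ≤ a) :
    Tendsto
      (fun n : ℕ =>
        (n : ℝ) *
          (1 + (1 - 1 / (n : ℝ) ^ 2) ^ (a * (n : ℝ)) * ((n : ℝ) ^ 2 - 1) *
              Real.log (1 - 1 / (n : ℝ) ^ 2)))
      atTop (nhds a) := by
  rcases eq_or_lt_of_le ha with rfl | ha'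
  · -- a = 0 : the power is 1 and the claim is aux_A
    have := aux_A
    refine this.congr (fun n => ?_)
    simp [Real.rpow_zero, mul_assoc]
  · -- a > 0
    set t : ℕ → ℝ := fun n => Real.log (1 - 1/(n:ℝ)^2) * (a * (n:ℝ)) with ht_def
    -- t → 0
    have h_t0 : Tendsto t atTop (nhds 0) := by
      have h1 : Tendsto (fun n : ℕ => a * (1/(n:ℝ))) atTop (nhds 0) := by
        simpa using tendsto_one_div_atTop_nhds_zero_nat.const_mul a
      have h2 := aux_sqL.mul h1
      rw [show (-1 : ℝ) * 0 = 0 by ring] at h2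
      refine h2.congr' ?_
      filter_upwards [eventually_ge_atTop 1] with n hn
      have hn0 : (n:ℝ) ≠ 0 := by
        have : (1:ℝ) ≤ (n:ℝ) := by exact_mod_cast hn
        linarith
      simp only [ht_def]
      field_simp
    -- eventually t n ≠ 0
    have h_t_ne : ∀ᶠ n : ℕ in atTop, t n ≠ 0 := by
      filter_upwards [eventually_ge_atTop 2] with n hn
      have hm : (2:ℝ) ≤ (n:ℝ) := by exact_mod_cast hn
      have hm2 : (1:ℝ) < (n:ℝ)^2 := by nlinarith
      have hu1 : 1/(n:ℝ)^2 < 1 := by rw [div_lt_one (by positivity)]; linarith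
      have hb0 : (0:ℝ) < 1 - 1/(n:ℝ)^2 := by
        have hu0 : (0:ℝ) < 1/(n:ℝ)^2 := by positivity
        linarith
      have hb1 : 1 - 1/(n:ℝ)^2 < 1 := by
        have hu0 : (0:ℝ) < 1/(n:ℝ)^2 := by positivity
        linarith
      have hL : Real.log (1 - 1/(n:ℝ)^2) < 0 := Real.log_neg hb0 hb1
      have ham : (0:ℝ) < a * (n:ℝ) := by positivity
      simp only [ht_def]
      exact ne_of_lt (mul_neg_of_neg_of_pos hL ham)
    -- slope limit
    have hslope : Tendsto (fun n : ℕ => (Real.exp (t n) - 1) / t n) atTop (nhds 1) := by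
      have hd := (Real.hasDerivAt_exp 0)
      rw [hasDerivAt_iff_tendsto_slope] at hd
      have htt : Tendsto t atTop (nhdsWithin 0 {(0:ℝ)}ᶜ) :=
        tendsto_nhdsWithin_iff.mpr ⟨h_t0, h_t_ne.mono (fun n h => h)⟩
      have := hd.comp htt
      simp only [Real.exp_zero] at this
      refine this.congr (fun n => ?_)
      simp [slope_def_field, Real.exp_zero]
    -- C n := a n² L n * slope → -a
    have hconst : Tendsto (fun n : ℕ => a * ((n:ℝ)^2 * Real.log (1 - 1/(n:ℝ)^2)))
        atTop (nhds (-a)) := by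
      have := aux_sqL.const_mul a
      simpa using this
    have hC : Tendsto (fun n : ℕ =>
        (a * ((n:ℝ)^2 * Real.log (1 - 1/(n:ℝ)^2))) * ((Real.exp (t n) - 1) / t n))
        atTop (nhds (-a)) := by
      have := hconst.mul hslope
      simpa using this
    -- assemble
    have hfin := aux_A.add (hC.mul aux_Q)
    rw [show (0:ℝ) + -a * -1 = a by ring] at hfin
    refine hfin.congr' ?_
    filter_upwards [h_t_ne, eventually_ge_atTop 2] with n htne hn
    have hm : (2:ℝ) ≤ (n:ℝ) := by exact_mod_cast hn
    have hm2 : (1:ℝ) < (n:ℝ)^2 := by nlinarith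
    have hu1 : 1/(n:ℝ)^2 < 1 := by rw [div_lt_one (by positivity)]; linarith
    have hb0 : (0:ℝ) < 1 - 1/(n:ℝ)^2 := by
      have hu0 : (0:ℝ) < 1/(n:ℝ)^2 := by positivity
      linarith
    have hP : (1 - 1/(n:ℝ)^2) ^ (a * (n:ℝ)) = Real.exp (t n) := by
      rw [Real.rpow_def_of_pos hb0]
    rw [hP]
    -- goal: A n + (a n² L * slope) * Q = n * (1 + exp(t) * (n²-1) * L)
    have hkey : (a * ((n:ℝ)^2 * Real.log (1 - 1/(n:ℝ)^2))) * ((Real.exp (t n) - 1) / t n)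
        = (n:ℝ) * (Real.exp (t n) - 1) := by
      have : a * ((n:ℝ)^2 * Real.log (1 - 1/(n:ℝ)^2)) = (n:ℝ) * t n := by
        simp only [ht_def]; ring
      rw [this, mul_assoc]
      congr 1
      rw [mul_comm, div_mul_cancel₀ _ htne]
    rw [hkey]
    ring
end

section
/- Let φ = (1+√5)/2, and fix reals a ≥ 0 and b ∈ [0,1]. Then lim_{n→∞} (1/n) · (1 − 1/n²)^{a·n} · ((φ·n + n·√n)/(1 + n·√n)) · ( ⌊b·n⌋ + ( (1 − 1/n² − 1/√n)^{⌊b·n⌋} − 1 ) · (n² − n·√n − 1)/(1 + n·√n) ) = b, where n ranges over natural numbers. -/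
open Filter

/-- Tail-contribution limit in the `1/φ` upper bound construction: the scaled closed
form of the online value with `⌊b·n⌋` steps remaining tends to `b`. -/
theorem tendsto_scaled_closed_form (φ : ℝ) (hφ : φ = (1 + Real.sqrt 5) / 2)
    (a b : ℝ) (ha : 0 ≤ a) (hb0 : 0 ≤ b) (hb1 : b ≤ 1) :
    Tendsto
      (fun n : ℕ =>
        (1 / (n : ℝ)) * (1 - 1 / (n : ℝ) ^ 2) ^ (a * (n : ℝ)) *
          ((φ * (n : ℝ) + (n : ℝ) * Real.sqrt n) / (1 + (n : ℝ) * Real.sqrt n)) *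
          ((⌊b * (n : ℝ)⌋₊ : ℝ) +
            ((1 - 1 / (n : ℝ) ^ 2 - 1 / Real.sqrt n) ^ (⌊b * (n : ℝ)⌋₊ : ℕ) - 1) *
              ((n : ℝ) ^ 2 - (n : ℝ) * Real.sqrt n - 1) / (1 + (n : ℝ) * Real.sqrt n)))
      atTop (nhds b) := by
  have hn : Tendsto (fun n : ℕ => (n : ℝ)) atTop atTop := tendsto_natCast_atTop_atTop
  have hsq : Tendsto (fun n : ℕ => Real.sqrt n) atTop atTop := by
    refine ((tendsto_rpow_atTop (by norm_num : (0:ℝ) < 1/2)).comp hn).congr fun n => ?_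
    simp [Real.sqrt_eq_rpow, Function.comp]
  have hnsq : Tendsto (fun n : ℕ => (n : ℝ) * Real.sqrt n) atTop atTop :=
    hn.atTop_mul_atTop₀ hsq
  -- T2
  have hT2 : Tendsto (fun n : ℕ => (1 - 1 / (n : ℝ) ^ 2) ^ (a * (n : ℝ))) atTop (nhds 1) := by
    rcases eq_or_lt_of_le ha with rfl | hapos
    · simpa using tendsto_const_nhds (α := ℝ) (f := atTop (α := ℕ))
    · have hlow : Tendsto (fun n : ℕ => 1 - a / (n : ℝ)) atTop (nhds 1) := by
        simpa using tendsto_const_nhds.sub ((tendsto_const_nhds (x := a)).div_atTop hn)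
      refine tendsto_of_tendsto_of_tendsto_of_le_of_le' hlow tendsto_const_nhds ?_ ?_
      · filter_upwards [hn.eventually_ge_atTop 1, hn.eventually_ge_atTop (1/a)] with n h1 h2
        have hs : (-1:ℝ) ≤ -1 / (n:ℝ)^2 := by
          rw [neg_div]
          have : 1 / (n:ℝ)^2 ≤ 1 := by
            rw [div_le_one (by positivity)]
            nlinarith
          linarith
        have hp : (1:ℝ) ≤ a * n := by
          rw [div_le_iff₀ hapos] at h2
          nlinarith
        have := one_add_mul_self_le_rpow_one_add hs hp
        have heq : (1:ℝ) + (-1/(n:ℝ)^2) = 1 - 1/(n:ℝ)^2 := by ring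
        rw [heq] at this
        calc 1 - a / (n:ℝ) = 1 + a * (n:ℝ) * (-1/(n:ℝ)^2) := by
              field_simp
              ring
          _ ≤ (1 - 1/(n:ℝ)^2) ^ (a * (n:ℝ)) := by
              have := one_add_mul_self_le_rpow_one_add hs hp
              rw [heq] at this
              linarith [this]
      · filter_upwards [hn.eventually_ge_atTop 1] with n h1
        apply Real.rpow_le_one
        · have : 1 / (n:ℝ)^2 ≤ 1 := by
            rw [div_le_one (by positivity)]; nlinarith
          linarith
        · have : 0 ≤ 1 / (n:ℝ)^2 := by positivity
          linarith
        · positivity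
  -- T3
  have hT3 : Tendsto (fun n : ℕ =>
      (φ * (n : ℝ) + (n : ℝ) * Real.sqrt n) / (1 + (n : ℝ) * Real.sqrt n)) atTop (nhds 1) := by
    have h1 : Tendsto (fun n : ℕ => φ / Real.sqrt n + 1) atTop (nhds 1) := by
      have := (tendsto_const_nhds (x := φ)).div_atTop hsq
      have := this.add (tendsto_const_nhds (x := (1:ℝ)))
      rwa [zero_add] at this
    have h2 : Tendsto (fun n : ℕ => 1 / ((n:ℝ) * Real.sqrt n) + 1) atTop (nhds 1) := by
      have := (tendsto_const_nhds (x := (1:ℝ))).div_atTop hnsq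
      have := this.add (tendsto_const_nhds (x := (1:ℝ)))
      rwa [zero_add] at this
    have := h1.div h2 one_ne_zero
    rw [div_one] at this
    refine Tendsto.congr' ?_ this
    filter_upwards [hn.eventually_ge_atTop 1] with n h1n
    have hnpos : (0:ℝ) < n := by linarith
    have hsp : 0 < Real.sqrt n := Real.sqrt_pos.mpr hnpos
    have hns : (0:ℝ) < (n:ℝ) * Real.sqrt n := by positivity
    rw [Pi.div_apply]
    field_simp
  -- floor
  have hfloor : Tendsto (fun n : ℕ => (⌊b * (n : ℝ)⌋₊ : ℝ) / n) atTop (nhds b) :=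
    (tendsto_nat_floor_mul_div_atTop hb0).comp hn
  -- E → 0
  set E : ℕ → ℝ := fun n =>
    ((1 - 1 / (n : ℝ) ^ 2 - 1 / Real.sqrt n) ^ (⌊b * (n : ℝ)⌋₊ : ℕ) - 1) *
      ((n : ℝ) ^ 2 - (n : ℝ) * Real.sqrt n - 1) / (1 + (n : ℝ) * Real.sqrt n) / n with hE_def
  have hE : Tendsto E atTop (nhds 0) := by
    refine squeeze_zero_norm' ?_ ((tendsto_const_nhds (x := (1:ℝ))).div_atTop hsq)
    · filter_upwards [hn.eventually_ge_atTop 4] with n h4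
      have hnpos : (0:ℝ) < n := by linarith
      have hsp : 0 < Real.sqrt n := Real.sqrt_pos.mpr hnpos
      have hs2 : (2:ℝ) ≤ Real.sqrt n := by
        rw [show (2:ℝ) = Real.sqrt 4 by
          rw [show (4:ℝ) = 2^2 by norm_num, Real.sqrt_sq (by norm_num)]]
        exact Real.sqrt_le_sqrt h4
      have hss : Real.sqrt n * Real.sqrt n = (n:ℝ) := Real.mul_self_sqrt hnpos.le
      -- q ∈ [0,1]
      have hq0 : 0 ≤ 1 - 1 / (n:ℝ)^2 - 1 / Real.sqrt n := by
        have h1 : 1 / (n:ℝ)^2 ≤ 1/16 := by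
          rw [div_le_div_iff₀ (by positivity) (by norm_num)]
          nlinarith
        have h2 : 1 / Real.sqrt n ≤ 1/2 := by
          rw [div_le_div_iff₀ hsp (by norm_num)]
          linarith
        linarith
      have hq1 : 1 - 1 / (n:ℝ)^2 - 1 / Real.sqrt n ≤ 1 := by
        have : 0 ≤ 1/(n:ℝ)^2 := by positivity
        have : 0 ≤ 1/Real.sqrt n := by positivity
        linarith
      have hqpow0 : 0 ≤ (1 - 1 / (n:ℝ)^2 - 1 / Real.sqrt n) ^ (⌊b * (n : ℝ)⌋₊ : ℕ) :=
        pow_nonneg hq0 _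
      have hqpow1 : (1 - 1 / (n:ℝ)^2 - 1 / Real.sqrt n) ^ (⌊b * (n : ℝ)⌋₊ : ℕ) ≤ 1 :=
        pow_le_one₀ hq0 hq1
      have habs : |(1 - 1 / (n:ℝ)^2 - 1 / Real.sqrt n) ^ (⌊b * (n : ℝ)⌋₊ : ℕ) - 1| ≤ 1 := by
        rw [abs_le]; constructor <;> linarith
      -- middle factor bound
      have hden : (0:ℝ) < 1 + (n:ℝ) * Real.sqrt n := by positivity
      have hnum0 : (0:ℝ) ≤ (n:ℝ)^2 - (n:ℝ) * Real.sqrt n - 1 := by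
        nlinarith
      have hmid : ((n:ℝ)^2 - (n:ℝ) * Real.sqrt n - 1) / (1 + (n:ℝ) * Real.sqrt n) ≤ Real.sqrt n := by
        rw [div_le_iff₀ hden]
        nlinarith
      have hmid0 : 0 ≤ ((n:ℝ)^2 - (n:ℝ) * Real.sqrt n - 1) / (1 + (n:ℝ) * Real.sqrt n) :=
        div_nonneg hnum0 hden.le
      rw [Real.norm_eq_abs, hE_def]
      simp only
      rw [abs_div, abs_div, abs_mul]
      rw [abs_of_pos hden, abs_of_nonneg hnum0, abs_of_pos hnpos]
      rw [div_div]
      rw [div_le_div_iff₀ (by positivity) hsp]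
      calc |(1 - 1 / (n:ℝ)^2 - 1 / Real.sqrt n) ^ (⌊b * (n : ℝ)⌋₊ : ℕ) - 1| *
            ((n:ℝ)^2 - (n:ℝ) * Real.sqrt n - 1) * Real.sqrt n
          ≤ 1 * ((n:ℝ)^2 - (n:ℝ) * Real.sqrt n - 1) * Real.sqrt n := by
            apply mul_le_mul_of_nonneg_right (mul_le_mul_of_nonneg_right habs hnum0) hsp.le
        _ ≤ 1 * ((1 + (n:ℝ) * Real.sqrt n) * (n:ℝ)) := by
            rw [one_mul, one_mul]
            nlinarith
  -- combine
  have key := (hT2.mul hT3).mul (hfloor.add hE)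
  rw [show (1:ℝ) * 1 * (b + 0) = b by ring] at key
  refine key.congr fun n => ?_
  rw [hE_def]
  ring
end

section
/- Let φ = (1+√5)/2. Then lim_{n→∞} (1/n) · Σ_{i=1}^{n} ( φ·n·(1 − (1 − 1/n²)^i) + (1 − 1/n²)^i − (1 − 1/√n − 1/n²)^i ) = φ/2 + 1, where n ranges over natural numbers n ≥ 2. -/
open Filter

private lemma geom_Icc {r : ℝ} (hr : r ≠ 1) (n : ℕ) :
    ∑ i ∈ Finset.Icc 1 n, r ^ i = (r ^ (n + 1) - r) / (r - 1) := by
  rw [← Finset.Ico_add_one_right_eq_Icc, geom_sum_Ico hr (Nat.le_add_left 1 n), pow_one]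

private lemma exp_quad {x : ℝ} (hx : |x| ≤ 1) :
    |Real.exp x - (1 + x + x ^ 2 / 2)| ≤ |x| ^ 3 := by
  have h := Real.exp_bound hx (n := 3) (by norm_num)
  simp [Finset.sum_range_succ] at h
  have h3 : (0:ℝ) ≤ |x| ^ 3 := by positivity
  calc |Real.exp x - (1 + x + x ^ 2 / 2)| ≤ |x| ^ 3 * (4 / (↑(Nat.factorial 3) * 3)) := h
    _ ≤ |x| ^ 3 := by rw [Nat.factorial]; norm_num; nlinarith

private lemma tendA :
    Tendsto (fun n : ℕ => (n : ℝ) - ((n : ℝ) ^ 2 - 1) * (1 - (1 - 1 / (n : ℝ) ^ 2) ^ n))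
      atTop (nhds (1 / 2)) := by
  -- G part: n^2 (exp(-1/n) - 1 + 1/n) → 1/2
  have hG : Tendsto (fun n : ℕ => (n:ℝ)^2 * (Real.exp (-1/(n:ℝ)) - 1 + 1/(n:ℝ)))
      atTop (nhds (1/2)) := by
    have h0 : Tendsto
        (fun n : ℕ => (n:ℝ)^2 * (Real.exp (-1/(n:ℝ)) - 1 + 1/(n:ℝ)) - 1/2) atTop (nhds 0) := by
      apply squeeze_zero_norm' (a := fun n : ℕ => 1/(n:ℝ))
      · filter_upwards [eventually_ge_atTop 1] with n hn
        have hn1 : (1:ℝ) ≤ (n:ℝ) := by exact_mod_cast hn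
        have hn0 : (0:ℝ) < n := by linarith
        have habs : |(-1/(n:ℝ))| = 1/(n:ℝ) := by
          rw [abs_div, abs_neg, abs_one, abs_of_pos hn0]
        have hx : |(-1/(n:ℝ))| ≤ 1 := by
          rw [habs]; rw [div_le_one hn0]; linarith
        have key := exp_quad hx
        rw [habs] at key
        have e1 : (n:ℝ)^2 * (Real.exp (-1/(n:ℝ)) - 1 + 1/(n:ℝ)) - 1/2
            = (n:ℝ)^2 * (Real.exp (-1/(n:ℝ)) - (1 + (-1/(n:ℝ)) + (-1/(n:ℝ))^2/2)) := by
          field_simp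
          ring
        rw [e1, Real.norm_eq_abs, abs_mul, abs_of_nonneg (by positivity : (0:ℝ) ≤ (n:ℝ)^2)]
        calc (n:ℝ)^2 * |Real.exp (-1/(n:ℝ)) - (1 + (-1/(n:ℝ)) + (-1/(n:ℝ))^2/2)|
            ≤ (n:ℝ)^2 * (1/(n:ℝ))^3 := by
              apply mul_le_mul_of_nonneg_left key (by positivity)
          _ = 1/(n:ℝ) := by field_simp
      · exact tendsto_one_div_atTop_nhds_zero_nat
    have := h0.add (tendsto_const_nhds (x := (1/2:ℝ)))
    simpa using this
  -- E part: n^2 (t n - exp(-1/n)) → 0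
  have hE : Tendsto (fun n : ℕ => (n:ℝ)^2 * ((1 - 1/(n:ℝ)^2)^n - Real.exp (-1/(n:ℝ))))
      atTop (nhds 0) := by
    apply squeeze_zero_norm' (a := fun n : ℕ => 2/(n:ℝ))
    · filter_upwards [eventually_ge_atTop 2] with n hn
      have hn2 : (2:ℝ) ≤ (n:ℝ) := by exact_mod_cast hn
      have hn0 : (0:ℝ) < n := by linarith
      have hsq : (0:ℝ) < (n:ℝ)^2 - 1 := by nlinarith
      have hapos : (0:ℝ) < 1 - 1/(n:ℝ)^2 := by
        rw [sub_pos, div_lt_one (by positivity)]; nlinarith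
      -- upper bound : t ≤ exp (-1/n)
      have hub : (1 - 1/(n:ℝ)^2)^n ≤ Real.exp (-1/(n:ℝ)) := by
        have h1 : 1 - 1/(n:ℝ)^2 ≤ Real.exp (-(1/(n:ℝ)^2)) := by
          have := Real.add_one_le_exp (-(1/(n:ℝ)^2)); linarith
        calc (1 - 1/(n:ℝ)^2)^n ≤ (Real.exp (-(1/(n:ℝ)^2)))^n :=
              pow_le_pow_left₀ hapos.le h1 n
          _ = Real.exp ((n:ℝ) * -(1/(n:ℝ)^2)) := (Real.exp_nat_mul _ n).symm
          _ = Real.exp (-1/(n:ℝ)) := by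
              congr 1; field_simp
      -- lower bound : exp(-n/(n²-1)) ≤ t
      have hlb : Real.exp (-(n:ℝ)/((n:ℝ)^2 - 1)) ≤ (1 - 1/(n:ℝ)^2)^n := by
        have hlog := Real.one_sub_inv_le_log_of_pos hapos
        have e : (1:ℝ) - (1 - 1/(n:ℝ)^2)⁻¹ = -(1/((n:ℝ)^2 - 1)) := by
          field_simp
          ring
        have h2 : -(n:ℝ)/((n:ℝ)^2-1) ≤ (n:ℝ) * Real.log (1 - 1/(n:ℝ)^2) := by
          have := mul_le_mul_of_nonneg_left hlog (le_of_lt hn0)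
          rw [e] at this
          calc -(n:ℝ)/((n:ℝ)^2-1) = (n:ℝ) * -(1/((n:ℝ)^2 - 1)) := by ring
            _ ≤ (n:ℝ) * Real.log (1 - 1/(n:ℝ)^2) := this
        calc Real.exp (-(n:ℝ)/((n:ℝ)^2-1)) ≤ Real.exp ((n:ℝ) * Real.log (1 - 1/(n:ℝ)^2)) :=
              Real.exp_le_exp.2 h2
          _ = (Real.exp (Real.log (1 - 1/(n:ℝ)^2)))^n := Real.exp_nat_mul _ n
          _ = (1 - 1/(n:ℝ)^2)^n := by rw [Real.exp_log hapos]
      -- the gap between the two exponentials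
      set δ : ℝ := (n:ℝ)/((n:ℝ)^2-1) - 1/(n:ℝ) with hδdef
      have hδ0 : 0 ≤ δ := by
        rw [hδdef, sub_nonneg, div_le_div_iff₀ hn0 hsq]; nlinarith
      have he2 : Real.exp (-(n:ℝ)/((n:ℝ)^2-1)) = Real.exp (-1/(n:ℝ)) * Real.exp (-δ) := by
        rw [← Real.exp_add]; congr 1; rw [hδdef]; ring
      have hd1 : 1 - Real.exp (-δ) ≤ δ := by
        have := Real.add_one_le_exp (-δ); linarith
      have hd2 : Real.exp (-δ) ≤ 1 := Real.exp_le_one_iff.2 (by linarith)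
      have hd3 : Real.exp (-1/(n:ℝ)) ≤ 1 := Real.exp_le_one_iff.2 (by
        rw [neg_div, neg_nonpos]; positivity)
      have hdiff : Real.exp (-1/(n:ℝ)) - Real.exp (-(n:ℝ)/((n:ℝ)^2-1)) ≤ δ := by
        rw [he2]
        calc Real.exp (-1/(n:ℝ)) - Real.exp (-1/(n:ℝ)) * Real.exp (-δ)
            = Real.exp (-1/(n:ℝ)) * (1 - Real.exp (-δ)) := by ring
          _ ≤ 1 * (1 - Real.exp (-δ)) :=
              mul_le_mul_of_nonneg_right hd3 (by linarith)
          _ = 1 - Real.exp (-δ) := one_mul _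
          _ ≤ δ := hd1
      have hδval : δ = 1/((n:ℝ)*((n:ℝ)^2-1)) := by
        rw [hδdef]; field_simp; ring
      have hδle : δ ≤ 2/(n:ℝ)^3 := by
        rw [hδval, div_le_div_iff₀ (by positivity) (by positivity)]
        nlinarith
      have habs : ‖(n:ℝ)^2 * ((1 - 1/(n:ℝ)^2)^n - Real.exp (-1/(n:ℝ)))‖
          = (n:ℝ)^2 * (Real.exp (-1/(n:ℝ)) - (1 - 1/(n:ℝ)^2)^n) := by
        rw [Real.norm_eq_abs, abs_mul, abs_of_nonneg (by positivity : (0:ℝ) ≤ (n:ℝ)^2),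
          abs_of_nonpos (by linarith), neg_sub]
      rw [habs]
      calc (n:ℝ)^2 * (Real.exp (-1/(n:ℝ)) - (1 - 1/(n:ℝ)^2)^n)
          ≤ (n:ℝ)^2 * (2/(n:ℝ)^3) := by
            apply mul_le_mul_of_nonneg_left _ (by positivity)
            linarith
        _ = 2/(n:ℝ) := by field_simp
    · have : Tendsto (fun n : ℕ => (2:ℝ) * (1/(n:ℝ))) atTop (nhds (2 * 0)) :=
        tendsto_one_div_atTop_nhds_zero_nat.const_mul 2
      simpa [div_eq_mul_inv] using this
  -- t → 1
  have ht1 : Tendsto (fun n : ℕ => (1 - 1/(n:ℝ)^2)^n) atTop (nhds 1) := by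
    have hlow : Tendsto (fun n : ℕ => 1 - 1/(n:ℝ)) atTop (nhds 1) := by
      have := tendsto_const_nhds (x := (1:ℝ)) (f := atTop (α := ℕ)) |>.sub
        tendsto_one_div_atTop_nhds_zero_nat
      simpa using this
    apply tendsto_of_tendsto_of_tendsto_of_le_of_le' hlow tendsto_const_nhds
    · filter_upwards [eventually_ge_atTop 2] with n hn
      have hn2 : (2:ℝ) ≤ (n:ℝ) := by exact_mod_cast hn
      have hn0 : (0:ℝ) < n := by linarith
      have hH : (-2:ℝ) ≤ -(1/(n:ℝ)^2) := by
        have : 1/(n:ℝ)^2 ≤ 1 := by rw [div_le_one (by positivity)]; nlinarith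
        linarith
      have := one_add_mul_le_pow hH n
      have e1 : (1:ℝ) + (n:ℝ) * -(1/(n:ℝ)^2) = 1 - 1/(n:ℝ) := by field_simp; ring
      have e2 : (1:ℝ) + -(1/(n:ℝ)^2) = 1 - 1/(n:ℝ)^2 := by ring
      rw [e1, e2] at this
      exact this
    · filter_upwards [eventually_ge_atTop 2] with n hn
      have hn2 : (2:ℝ) ≤ (n:ℝ) := by exact_mod_cast hn
      have hapos : (0:ℝ) ≤ 1 - 1/(n:ℝ)^2 := by
        rw [sub_nonneg, div_le_one (by positivity)]; nlinarith
      have hle : 1 - 1/(n:ℝ)^2 ≤ 1 := by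
        have : (0:ℝ) ≤ 1/(n:ℝ)^2 := by positivity
        linarith
      exact pow_le_one₀ hapos hle
  -- glue
  have key : (fun n : ℕ => (n:ℝ)^2 * (Real.exp (-1/(n:ℝ)) - 1 + 1/(n:ℝ))
        + (n:ℝ)^2 * ((1 - 1/(n:ℝ)^2)^n - Real.exp (-1/(n:ℝ)))
        + (1 - (1 - 1/(n:ℝ)^2)^n))
      =ᶠ[atTop] (fun n : ℕ => (n : ℝ) - ((n : ℝ) ^ 2 - 1) * (1 - (1 - 1 / (n : ℝ) ^ 2) ^ n)) := by
    filter_upwards [eventually_ge_atTop 1] with n hn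
    have hn0 : (n:ℝ) ≠ 0 := by
      have : (1:ℝ) ≤ (n:ℝ) := by exact_mod_cast hn
      linarith
    field_simp
    ring
  have hfinal := (hG.add hE).add (tendsto_const_nhds (x := (1:ℝ)) |>.sub ht1)
  have h2 := Tendsto.congr' key hfinal
  have hv : (1/2 + 0 + (1 - 1) : ℝ) = 1/2 := by norm_num
  rwa [hv] at h2

/-- The prophet's expected value on the three-point distribution is asymptotically
`(φ/2 + 1)·n`. -/
theorem tendsto_prophet_value (φ : ℝ) (hφ : φ = (1 + Real.sqrt 5) / 2) :
    Tendsto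
      (fun n : ℕ =>
        (1 / (n : ℝ)) *
          ∑ i ∈ Finset.Icc 1 n,
            (φ * (n : ℝ) * (1 - (1 - 1 / (n : ℝ) ^ 2) ^ i) +
              (1 - 1 / (n : ℝ) ^ 2) ^ i - (1 - 1 / Real.sqrt n - 1 / (n : ℝ) ^ 2) ^ i))
      atTop (nhds (φ / 2 + 1)) := by
  have hA := tendA
  set A : ℕ → ℝ := fun n => (n : ℝ) - ((n : ℝ) ^ 2 - 1) * (1 - (1 - 1 / (n : ℝ) ^ 2) ^ n) with hAdef
  -- the b-sum divided by n tends to 0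
  have hb : Tendsto
      (fun n : ℕ => (∑ i ∈ Finset.Icc 1 n, (1 - 1/Real.sqrt n - 1/(n:ℝ)^2)^i) / (n:ℝ))
      atTop (nhds 0) := by
    apply squeeze_zero_norm' (a := fun n : ℕ => Real.sqrt n / (n:ℝ))
    · filter_upwards [eventually_ge_atTop 2] with n hn
      have hn2 : (2:ℝ) ≤ (n:ℝ) := by exact_mod_cast hn
      have hn0 : (0:ℝ) < n := by linarith
      set s : ℝ := Real.sqrt n with hsdef
      have hs2 : Real.sqrt 2 ≤ s := Real.sqrt_le_sqrt (by exact_mod_cast hn2)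
      have h14 : (1.4:ℝ) ≤ Real.sqrt 2 := by
        nlinarith [Real.sq_sqrt (by norm_num : (0:ℝ) ≤ 2), Real.sqrt_nonneg 2]
      have hs14 : (1.4:ℝ) ≤ s := le_trans h14 hs2
      have hs0 : (0:ℝ) < s := by linarith
      have h1s : 1/s ≤ 1/(1.4:ℝ) := by
        apply one_div_le_one_div_of_le (by norm_num) hs14
      have h1n : 1/(n:ℝ)^2 ≤ 1/4 := by
        apply one_div_le_one_div_of_le (by norm_num)
        nlinarith
      have hb0 : (0:ℝ) ≤ 1 - 1/s - 1/(n:ℝ)^2 := by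
        have : (1:ℝ)/(1.4:ℝ) + 1/4 < 1 := by norm_num
        linarith
      have hbc : 1 - 1/s - 1/(n:ℝ)^2 ≤ 1 - 1/s := by
        have : (0:ℝ) ≤ 1/(n:ℝ)^2 := by positivity
        linarith
      have hc1 : 1 - 1/s < 1 := by
        have : (0:ℝ) < 1/s := by positivity
        linarith
      have hc0 : (0:ℝ) ≤ 1 - 1/s := le_trans hb0 (by
        have : (0:ℝ) ≤ 1/(n:ℝ)^2 := by positivity
        linarith)
      have hsum1 : ∑ i ∈ Finset.Icc 1 n, (1 - 1/s - 1/(n:ℝ)^2)^i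
          ≤ ∑ i ∈ Finset.Icc 1 n, (1 - 1/s)^i :=
        Finset.sum_le_sum fun i _ => pow_le_pow_left₀ hb0 hbc i
      have hsum2 : ∑ i ∈ Finset.Icc 1 n, (1 - 1/s)^i ≤ ∑ i ∈ Finset.range (n+1), (1 - 1/s)^i := by
        apply Finset.sum_le_sum_of_subset_of_nonneg
        · intro i hi
          simp only [Finset.mem_Icc] at hi
          simp only [Finset.mem_range]
          omega
        · intro i _ _
          exact pow_nonneg hc0 i
      have hsum3 : ∑ i ∈ Finset.range (n+1), (1 - 1/s)^i ≤ s := by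
        rw [geom_sum_eq (ne_of_lt hc1)]
        rw [div_le_iff_of_neg (by linarith : (1 - 1/s) - 1 < 0)]
        have hp : (0:ℝ) ≤ (1 - 1/s)^(n+1) := pow_nonneg hc0 _
        have he : s * ((1 - 1/s) - 1) = -1 := by
          field_simp
          ring
        linarith
      have hSb0 : (0:ℝ) ≤ ∑ i ∈ Finset.Icc 1 n, (1 - 1/s - 1/(n:ℝ)^2)^i :=
        Finset.sum_nonneg fun i _ => pow_nonneg hb0 i
      rw [Real.norm_eq_abs, abs_of_nonneg (by positivity)]
      exact div_le_div_of_nonneg_right (le_trans hsum1 (le_trans hsum2 hsum3)) hn0.le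
    · -- sqrt n / n → 0
      have h0 : Tendsto (fun n : ℕ => Real.sqrt ((n:ℝ)⁻¹)) atTop (nhds 0) := by
        have h1 := (Real.continuous_sqrt.tendsto 0).comp tendsto_inv_atTop_nhds_zero_nat
        rw [Real.sqrt_zero] at h1
        exact h1
      apply h0.congr
      intro n
      rw [Real.sqrt_inv, ← Real.sqrt_div_self]
  -- main identity
  have hId : (fun n : ℕ =>
        φ * A n + 1 - A n / (n:ℝ)
          - (∑ i ∈ Finset.Icc 1 n, (1 - 1/Real.sqrt n - 1/(n:ℝ)^2)^i) / (n:ℝ))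
      =ᶠ[atTop] (fun n : ℕ =>
        (1 / (n : ℝ)) *
          ∑ i ∈ Finset.Icc 1 n,
            (φ * (n : ℝ) * (1 - (1 - 1 / (n : ℝ) ^ 2) ^ i) +
              (1 - 1 / (n : ℝ) ^ 2) ^ i - (1 - 1 / Real.sqrt n - 1 / (n : ℝ) ^ 2) ^ i)) := by
    filter_upwards [eventually_ge_atTop 2] with n hn
    have hn2 : (2:ℝ) ≤ (n:ℝ) := by exact_mod_cast hn
    have hn0 : (0:ℝ) < (n:ℝ) := by linarith
    have hpos : (0:ℝ) < 1/(n:ℝ)^2 := by positivity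
    have hane : (1 - 1/(n:ℝ)^2 : ℝ) ≠ 1 := ne_of_lt (by linarith)
    have hSa : ∑ i ∈ Finset.Icc 1 n, (1 - 1/(n:ℝ)^2)^i
        = ((n:ℝ)^2 - 1) * (1 - (1 - 1/(n:ℝ)^2)^n) := by
      rw [geom_Icc hane, pow_succ]
      rw [div_eq_iff (sub_ne_zero.mpr hane)]
      field_simp
      ring
    have h1 : ∑ i ∈ Finset.Icc 1 n, (φ * (n:ℝ) * (1 - (1 - 1/(n:ℝ)^2)^i))
        = φ * (n:ℝ) * ((n:ℝ) - ∑ i ∈ Finset.Icc 1 n, (1 - 1/(n:ℝ)^2)^i) := by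
      rw [← Finset.mul_sum, Finset.sum_sub_distrib, Finset.sum_const, Nat.card_Icc]
      simp
    have hsplit : ∑ i ∈ Finset.Icc 1 n,
          (φ * (n:ℝ) * (1 - (1 - 1/(n:ℝ)^2)^i) + (1 - 1/(n:ℝ)^2)^i
            - (1 - 1/Real.sqrt n - 1/(n:ℝ)^2)^i)
        = φ * (n:ℝ) * ((n:ℝ) - ∑ i ∈ Finset.Icc 1 n, (1 - 1/(n:ℝ)^2)^i)
          + ∑ i ∈ Finset.Icc 1 n, (1 - 1/(n:ℝ)^2)^i
          - ∑ i ∈ Finset.Icc 1 n, (1 - 1/Real.sqrt n - 1/(n:ℝ)^2)^i := by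
      rw [Finset.sum_sub_distrib, Finset.sum_add_distrib, h1]
    rw [hsplit, hSa, hAdef]
    field_simp
    ring
  have hRHS : Tendsto (fun n : ℕ =>
      φ * A n + 1 - A n / (n:ℝ)
        - (∑ i ∈ Finset.Icc 1 n, (1 - 1/Real.sqrt n - 1/(n:ℝ)^2)^i) / (n:ℝ))
      atTop (nhds (φ * (1/2) + 1 - 0 - 0)) :=
    (((hA.const_mul φ).add tendsto_const_nhds).sub
      (hA.div_atTop tendsto_natCast_atTop_atTop)).sub hb
  have hfin := Tendsto.congr' hId hRHS
  have hv : φ * (1/2) + 1 - 0 - 0 = φ/2 + 1 := by ring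
  rwa [hv] at hfin
end

section
/- Let φ = (1+√5)/2 and fix a real b ∈ [0,1]. Then lim_{n→∞} (1/n) · Σ_{i=1}^{⌊b·n⌋} (1 − 1/n²)^{i−1} · ( φ·(n − i + 1)/n + 1/√n ) = φ·b·(1 − b/2), where n ranges over natural numbers n ≥ 2. -/
open Filter

-- floor ratio tends to b
private lemma floor_ratio_tendsto (b : ℝ) (hb0 : 0 ≤ b) :
    Tendsto (fun n : ℕ => (⌊b * (n : ℝ)⌋₊ : ℝ) / n) atTop (nhds b) := by
  have h1 : Tendsto (fun n : ℕ => b - 1 / (n : ℝ)) atTop (nhds b) := by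
    simpa using tendsto_const_nhds.sub (tendsto_one_div_atTop_nhds_zero_nat (𝕜 := ℝ))
  apply tendsto_of_tendsto_of_tendsto_of_le_of_le' h1 tendsto_const_nhds
  · filter_upwards [eventually_ge_atTop 1] with n hn
    have hn0 : (0:ℝ) < n := by exact_mod_cast hn
    have h := Nat.sub_one_lt_floor (b * (n:ℝ))
    rw [sub_le_iff_le_add, ← add_div, le_div_iff₀ hn0]
    linarith
  · filter_upwards [eventually_ge_atTop 1] with n hn
    have hn0 : (0:ℝ) < n := by exact_mod_cast hn
    rw [div_le_iff₀ hn0]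
    have := Nat.floor_le (by positivity : (0:ℝ) ≤ b * n)
    linarith

-- Bernoulli squeeze
private lemma pow_base_tendsto :
    Tendsto (fun n : ℕ => (1 - 1/(n:ℝ)^2)^n) atTop (nhds 1) := by
  have h1 : Tendsto (fun n : ℕ => 1 - 1 / (n : ℝ)) atTop (nhds 1) := by
    simpa using tendsto_const_nhds.sub (tendsto_one_div_atTop_nhds_zero_nat (𝕜 := ℝ))
  apply tendsto_of_tendsto_of_tendsto_of_le_of_le' h1 tendsto_const_nhds
  · filter_upwards [eventually_ge_atTop 1] with n hn
    have hn0 : (1:ℝ) ≤ n := by exact_mod_cast hn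
    have hx : 1/(n:ℝ)^2 ≤ 1 := by
      rw [div_le_one (by nlinarith)]; nlinarith
    have h := one_add_mul_le_pow (a := -(1/(n:ℝ)^2)) (by linarith) n
    have e : (1:ℝ) + -(1/(n:ℝ)^2) = 1 - 1/(n:ℝ)^2 := by ring
    rw [e] at h
    have e2 : (n:ℝ) * (1/(n:ℝ)^2) = 1/n := by
      field_simp
    refine le_trans ?_ h
    rw [mul_neg]
    linarith [e2]
  · filter_upwards [eventually_ge_atTop 1] with n hn
    have hn0 : (1:ℝ) ≤ n := by exact_mod_cast hn
    have hx : 1/(n:ℝ)^2 ≤ 1 := by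
      rw [div_le_one (by nlinarith)]; nlinarith
    exact pow_le_one₀ (by linarith) (sub_le_self _ (by positivity))

private lemma sum_aux (n m : ℕ) :
    ∑ i ∈ Finset.Icc 1 m, ((n:ℝ) - (i:ℝ) + 1) = m*((n:ℝ)+1) - m*(m+1)/2 := by
  induction m with
  | zero => simp
  | succ k ih =>
    rw [Finset.sum_Icc_succ_top (by omega)]
    push_cast
    push_cast at ih
    rw [ih]; ring

/-- Per-step contribution limit of the optimal online algorithm on the three-point
distribution: the scaled partial sum up to `⌊b·n⌋` tends to `φ·b·(1 − b/2)`. -/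
theorem tendsto_online_partial_sum (φ : ℝ) (hφ : φ = (1 + Real.sqrt 5) / 2)
    (b : ℝ) (hb0 : 0 ≤ b) (hb1 : b ≤ 1) :
    Tendsto
      (fun n : ℕ =>
        (1 / (n : ℝ)) *
          ∑ i ∈ Finset.Icc 1 ⌊b * (n : ℝ)⌋₊,
            (1 - 1 / (n : ℝ) ^ 2) ^ (i - 1) *
              (φ * ((n : ℝ) - (i : ℝ) + 1) / (n : ℝ) + 1 / Real.sqrt n))
      atTop (nhds (φ * b * (1 - b / 2))) := by
  have hφ0 : 0 ≤ φ := by rw [hφ]; positivity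
  set m : ℕ → ℕ := fun n => ⌊b * (n:ℝ)⌋₊ with hm
  set S : ℕ → ℝ := fun n => (1/(n:ℝ)) * ∑ i ∈ Finset.Icc 1 (m n),
      (φ * ((n:ℝ) - (i:ℝ) + 1)/(n:ℝ) + 1/Real.sqrt n) with hSdef
  -- m n ≤ n
  have hmn : ∀ n : ℕ, m n ≤ n := by
    intro n
    calc m n ≤ ⌊(n:ℝ)⌋₊ := Nat.floor_le_floor (by nlinarith [Nat.cast_nonneg (α := ℝ) n])
    _ = n := Nat.floor_natCast n
  -- terms nonneg
  have hterm : ∀ n : ℕ, ∀ i ∈ Finset.Icc 1 (m n),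
      0 ≤ φ * ((n:ℝ) - (i:ℝ) + 1)/(n:ℝ) + 1/Real.sqrt n := by
    intro n i hi
    rw [Finset.mem_Icc] at hi
    have h2 : (i:ℝ) ≤ n := by exact_mod_cast (hi.2.trans (hmn n))
    have h1 : 0 ≤ (n:ℝ) - i + 1 := by linarith
    positivity
  -- Tendsto S
  have hS : Tendsto S atTop (nhds (φ * b * (1 - b / 2))) := by
    have hr : Tendsto (fun n : ℕ => (m n : ℝ)/n) atTop (nhds b) := floor_ratio_tendsto b hb0
    have hinv : Tendsto (fun n : ℕ => 1/(n:ℝ)) atTop (nhds 0) := tendsto_one_div_atTop_nhds_zero_nat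
    have hq : Tendsto (fun n : ℕ => ((n:ℝ)+1)/n) atTop (nhds 1) := by
      apply Tendsto.congr' _ (by simpa using tendsto_const_nhds.add hinv)
      filter_upwards [eventually_ge_atTop 1] with n hn
      have hn0 : (n:ℝ) ≠ 0 := by positivity
      field_simp
    have hsq : Tendsto (fun n : ℕ => 1/Real.sqrt n) atTop (nhds 0) := by
      have h := (Real.continuous_sqrt.tendsto 0).comp hinv
      rw [Real.sqrt_zero] at h
      apply h.congr
      intro n
      simp [one_div, Real.sqrt_inv, Function.comp]
    have hF : Tendsto (fun n : ℕ =>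
        φ * ((m n : ℝ)/n * (((n:ℝ)+1)/n) - ((m n : ℝ)/n) * ((m n : ℝ)/n + 1/n)/2)
          + ((m n : ℝ)/n) * (1/Real.sqrt n)) atTop
        (nhds (φ * (b * 1 - b * (b + 0)/2) + b * 0)) := by
      exact (((hr.mul hq).sub ((hr.mul (hr.add hinv)).div_const 2)).const_mul φ).add (hr.mul hsq)
    have hval : φ * (b * 1 - b * (b + 0)/2) + b * 0 = φ * b * (1 - b/2) := by ring
    rw [hval] at hF
    apply hF.congr'
    filter_upwards [eventually_ge_atTop 1] with n hn
    have hn0 : (n:ℝ) ≠ 0 := by positivity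
    have hs0 : Real.sqrt n ≠ 0 := by
      have : (0:ℝ) < n := by exact_mod_cast hn
      positivity
    simp only [hSdef]
    rw [Finset.sum_add_distrib, Finset.sum_const, Nat.card_Icc]
    have e1 : ∑ i ∈ Finset.Icc 1 (m n), φ * ((n:ℝ) - (i:ℝ) + 1)/(n:ℝ)
        = (φ/n) * ∑ i ∈ Finset.Icc 1 (m n), ((n:ℝ) - (i:ℝ) + 1) := by
      rw [Finset.mul_sum]
      exact Finset.sum_congr rfl (fun i _ => by ring)
    rw [e1, sum_aux]
    simp only [Nat.add_sub_cancel, nsmul_eq_mul]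
    field_simp
  -- lower sequence tends to L
  have hA : Tendsto (fun n : ℕ => (1 - 1/(n:ℝ)^2)^n * S n) atTop
      (nhds (φ * b * (1 - b / 2))) := by
    simpa using pow_base_tendsto.mul hS
  apply tendsto_of_tendsto_of_tendsto_of_le_of_le' hA hS
  · -- lower bound
    filter_upwards [eventually_ge_atTop 1] with n hn
    have hn1 : (1:ℝ) ≤ n := by exact_mod_cast hn
    have hb0' : 0 ≤ 1 - 1/(n:ℝ)^2 := by
      have : 1/(n:ℝ)^2 ≤ 1 := by rw [div_le_one (by nlinarith)]; nlinarith
      linarith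
    have hb1' : 1 - 1/(n:ℝ)^2 ≤ 1 := sub_le_self _ (by positivity)
    have key : (1 - 1/(n:ℝ)^2)^n * S n
        = (1/(n:ℝ)) * ∑ i ∈ Finset.Icc 1 (m n),
            (1 - 1/(n:ℝ)^2)^n * (φ * ((n:ℝ) - (i:ℝ) + 1)/(n:ℝ) + 1/Real.sqrt n) := by
      simp only [hSdef]
      rw [← Finset.mul_sum]
      ring
    rw [key]
    apply mul_le_mul_of_nonneg_left _ (by positivity)
    apply Finset.sum_le_sum
    intro i hi
    apply mul_le_mul_of_nonneg_right _ (hterm n i hi)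
    apply pow_le_pow_of_le_one hb0' hb1'
    rw [Finset.mem_Icc] at hi
    have := hmn n
    omega
  · -- upper bound
    filter_upwards [eventually_ge_atTop 1] with n hn
    have hn1 : (1:ℝ) ≤ n := by exact_mod_cast hn
    have hb0' : 0 ≤ 1 - 1/(n:ℝ)^2 := by
      have : 1/(n:ℝ)^2 ≤ 1 := by rw [div_le_one (by nlinarith)]; nlinarith
      linarith
    have hb1' : 1 - 1/(n:ℝ)^2 ≤ 1 := sub_le_self _ (by positivity)
    apply mul_le_mul_of_nonneg_left _ (by positivity)
    apply Finset.sum_le_sum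
    intro i hi
    exact mul_le_of_le_one_left (hterm n i hi) (pow_le_one₀ hb0' hb1')
end
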